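/- arXiv:2412.20443 — 9 statements merged into one kernel-verified Lean document; each statement's English description precedes it below -/
import Mathlib

section
/- Let w be an integer with w ∉ {0, 2} such that 4w³ − 27 is squarefree. Then the Galois group over ℚ of the splitting field of f_{1,w}(x) := x³ − wx − 1 is isomorphic to the symmetric group S₃. -/
open Polynomial

private lemma aux_map_stmt2 (w : ℚ) {K : Type*} [Field K] (φ : ℚ →+* K) :
    (X ^ 3 - C w * X - 1 : ℚ[X]).map φ = X ^ 3 - C (φ w) * X - 1 := by
  simp [Polynomial.map_sub, Polynomial.map_mul, Polynomial.map_pow]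

private lemma aux_irr_stmt2 (w : ℤ) (hw0 : w ≠ 0) (hw2 : w ≠ 2) :
    Irreducible (X ^ 3 - C (w : ℚ) * X - 1 : ℚ[X]) := by
  have hdeg : (X ^ 3 - C (w : ℚ) * X - 1 : ℚ[X]).natDegree = 3 := by compute_degree!
  rw [irreducible_iff_roots_eq_zero_of_degree_le_three (by omega) (by omega)]
  by_contra h
  obtain ⟨r, hr⟩ := Multiset.exists_mem_of_ne_zero h
  have hne : (X ^ 3 - C (w : ℚ) * X - 1 : ℚ[X]) ≠ 0 := by
    intro h0; rw [h0] at hdeg; simp at hdeg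
  rw [mem_roots hne, IsRoot.def] at hr
  simp only [eval_sub, eval_mul, eval_pow, eval_X, eval_C, eval_one] at hr
  have hint : IsIntegral ℤ r := by
    refine ⟨X ^ 3 - C w * X - 1, by monicity!, ?_⟩
    simp only [eval₂_sub, eval₂_mul, eval₂_pow, eval₂_X, eval₂_C, eval₂_one]
    simp only [algebraMap_int_eq, eq_intCast]
    linear_combination hr
  obtain ⟨n, hn⟩ := IsIntegrallyClosed.isIntegral_iff.mp hint
  have hn' : (n : ℚ) = r := by exact_mod_cast hn
  rw [← hn'] at hr
  have hz : n ^ 3 - w * n - 1 = 0 := by exact_mod_cast hr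
  have hu : IsUnit n := IsUnit.of_mul_eq_one (n ^ 2 - w) (by ring_nf; linarith)
  rcases Int.isUnit_iff.mp hu with rfl | rfl
  · apply hw0; linarith
  · apply hw2; linarith

private lemma aux_nosq_stmt2 (w : ℤ) (hsf : Squarefree (4 * w ^ 3 - 27)) (q : ℚ)
    (h : q ^ 2 = ((4 * w ^ 3 - 27 : ℤ) : ℚ)) : False := by
  have hden : q.den ^ 2 = 1 := by
    have := congrArg Rat.den h
    rwa [Rat.den_pow, Rat.den_intCast] at this
  have hden1 : q.den = 1 := by nlinarith [q.den.le_refl]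
  have hq : (q.num : ℚ) = q := by rw [← Rat.num_div_den q, hden1]; simp
  have hz : q.num ^ 2 = 4 * w ^ 3 - 27 := by
    have : ((q.num : ℚ)) ^ 2 = ((4 * w ^ 3 - 27 : ℤ) : ℚ) := by rw [hq]; exact h
    exact_mod_cast this
  have hu : IsUnit q.num := hsf q.num ⟨1, by linarith [sq q.num]⟩
  have h7 : w ^ 3 = 7 := by
    rcases Int.isUnit_iff.mp hu with h1 | h1 <;> rw [h1] at hz <;> linarith
  have hdvd : w ∣ 7 := ⟨w ^ 2, by linarith⟩
  have hb := Int.le_of_dvd (by norm_num) hdvd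
  have hb2 : -7 ≤ w := by have := Int.le_of_dvd (by norm_num) hdvd.neg_left; omega
  interval_cases w <;> omega

private lemma aux_two_dvd_stmt2 (w : ℤ) (hsf : Squarefree (4 * w ^ 3 - 27))
    (hirr : Irreducible (X ^ 3 - C (w : ℚ) * X - 1 : ℚ[X])) :
    2 ∣ Module.finrank ℚ (X ^ 3 - C (w : ℚ) * X - 1 : ℚ[X]).SplittingField := by
  classical
  have hΔ : ∀ q : ℚ, q ^ 2 ≠ ((4 * w ^ 3 - 27 : ℤ) : ℚ) := fun q h =>
    aux_nosq_stmt2 w hsf q h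
  set p : ℚ[X] := X ^ 3 - C (w : ℚ) * X - 1 with hp
  have hdeg : p.natDegree = 3 := by rw [hp]; compute_degree!
  have hsep : p.Separable := hirr.separable
  set K := p.SplittingField with hK
  set φ := algebraMap ℚ K with hφ
  set W : K := φ (w : ℚ) with hW
  have hcard : Multiset.card (p.map φ).roots = 3 := by
    exact (SplittingField.splits p).natDegree_eq_card_roots.symm.trans ((natDegree_map _).trans hdeg)
  have hnodup : (p.map φ).roots.Nodup := nodup_roots (hsep.map)
  obtain ⟨a, b, c, habc⟩ := Multiset.card_eq_three.mp hcard
  rw [habc] at hnodup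
  simp only [Multiset.insert_eq_cons, Multiset.nodup_cons, Multiset.mem_cons,
    Multiset.mem_singleton, Multiset.nodup_singleton, and_true, not_or] at hnodup
  obtain ⟨⟨hab, hac⟩, hbc⟩ := hnodup
  have hmapne : p.map φ ≠ 0 := by
    intro h0
    have := Polynomial.natDegree_map_eq_of_injective φ.injective p
    rw [h0, natDegree_zero, hdeg] at this; omega
  have hmap : p.map φ = X ^ 3 - C W * X - 1 := aux_map_stmt2 _ φ
  have hroot : ∀ x ∈ (p.map φ).roots, x ^ 3 - W * x - 1 = 0 := by
    intro x hx
    have h2 := (mem_roots hmapne).mp hx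
    rw [IsRoot.def, hmap] at h2
    simpa using h2
  have ha : a ^ 3 - W * a - 1 = 0 := hroot a (by rw [habc]; simp)
  have hb : b ^ 3 - W * b - 1 = 0 := hroot b (by rw [habc]; simp)
  have hc : c ^ 3 - W * c - 1 = 0 := hroot c (by rw [habc]; simp)
  have hWab : a ^ 2 + a * b + b ^ 2 = W := by
    have h' : (a - b) * (a ^ 2 + a * b + b ^ 2 - W) = 0 := by linear_combination ha - hb
    have := (mul_eq_zero.mp h').resolve_left (sub_ne_zero.mpr hab)
    linear_combination this
  have hWac : a ^ 2 + a * c + c ^ 2 = W := by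
    have h' : (a - c) * (a ^ 2 + a * c + c ^ 2 - W) = 0 := by linear_combination ha - hc
    have := (mul_eq_zero.mp h').resolve_left (sub_ne_zero.mpr hac)
    linear_combination this
  have h1 : a + b + c = 0 := by
    have h' : (b - c) * (a + b + c) = 0 := by linear_combination hWab - hWac
    exact (mul_eq_zero.mp h').resolve_left (sub_ne_zero.mpr hbc)
  have hceq : c = -(a + b) := by linear_combination h1
  subst hceq
  have ht : a ^ 2 * b + a * b ^ 2 = -1 := by linear_combination a * hWab - ha
  set δ : K := (a - b) * (a - -(a + b)) * (b - -(a + b)) with hδ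
  have hδ2 : δ ^ 2 = φ ((4 * w ^ 3 - 27 : ℤ) : ℚ) := by
    have hφΔ : φ ((4 * w ^ 3 - 27 : ℤ) : ℚ) = 4 * W ^ 3 - 27 := by
      rw [hW]; push_cast; rw [map_sub, map_mul, map_pow]; simp
    rw [hφΔ, hδ]
    linear_combination (4 * (W ^ 2 + W * (a ^ 2 + a * b + b ^ 2) +
      (a ^ 2 + a * b + b ^ 2) ^ 2)) * hWab + (-27 * (a ^ 2 * b + a * b ^ 2 - 1)) * ht
  have hδint : IsIntegral ℚ δ := Algebra.IsIntegral.isIntegral δ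
  have hirr2 : Irreducible (X ^ 2 - C (((4 * w ^ 3 - 27 : ℤ) : ℚ)) : ℚ[X]) :=
    X_pow_sub_C_irreducible_of_prime Nat.prime_two (fun q hq => hΔ q hq)
  have hmin : minpoly ℚ δ = X ^ 2 - C (((4 * w ^ 3 - 27 : ℤ) : ℚ)) := by
    refine (minpoly.eq_of_irreducible_of_monic hirr2 ?_ ?_).symm
    · simp [map_sub, map_pow, aeval_X, aeval_C, hδ2, hφ]
    · monicity!
  have hfr : Module.finrank ℚ (IntermediateField.adjoin ℚ {δ} : IntermediateField ℚ K) = 2 := by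
    rw [IntermediateField.adjoin.finrank hδint, hmin]
    compute_degree!
  have := Module.finrank_mul_finrank ℚ (IntermediateField.adjoin ℚ {δ} : IntermediateField ℚ K) K
  exact ⟨Module.finrank (IntermediateField.adjoin ℚ {δ} : IntermediateField ℚ K) K,
    by rw [← this, hfr]⟩

theorem stmt_2 (w : ℤ) (hw0 : w ≠ 0) (hw2 : w ≠ 2)
    (hsf : Squarefree (4 * w ^ 3 - 27)) :
    Nonempty ((X ^ 3 - C (w : ℚ) * X - 1 : ℚ[X]).Gal ≃* Equiv.Perm (Fin 3)) := by
  classical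
  have hirr : Irreducible (X ^ 3 - C (w : ℚ) * X - 1 : ℚ[X]) := aux_irr_stmt2 w hw0 hw2
  set p : ℚ[X] := X ^ 3 - C (w : ℚ) * X - 1 with hp
  have hdeg : p.natDegree = 3 := by rw [hp]; compute_degree!
  have hsep : p.Separable := hirr.separable
  set K := p.SplittingField
  haveI hfact : Fact ((p.map (algebraMap ℚ K)).Splits) := ⟨SplittingField.splits p⟩
  have hcardroots : Fintype.card (p.rootSet K) = 3 := by
    exact (card_rootSet_eq_natDegree hsep (SplittingField.splits p)).trans hdeg
  have hcardperm : Fintype.card (Equiv.Perm (p.rootSet K)) = 6 := by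
    rw [Fintype.card_perm, hcardroots]; rfl
  have hinj := Polynomial.Gal.galActionHom_injective p K
  have hle : Fintype.card p.Gal ≤ 6 := hcardperm ▸ Fintype.card_le_of_injective _ hinj
  have hcardgal : Fintype.card p.Gal = Module.finrank ℚ K :=
    Nat.card_eq_fintype_card (α := p.Gal) ▸ Polynomial.Gal.card_of_separable hsep
  have h3 : 3 ∣ Fintype.card p.Gal :=
    hdeg ▸ Nat.card_eq_fintype_card (α := p.Gal) ▸ Polynomial.Gal.prime_degree_dvd_card hirr (by rw [hdeg]; norm_num)
  have h2 : 2 ∣ Fintype.card p.Gal := by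
    rw [hcardgal]
    exact aux_two_dvd_stmt2 w hsf hirr
  have h6 : Fintype.card p.Gal = 6 := by
    have := Nat.Coprime.mul_dvd_of_dvd_of_dvd (by norm_num) h2 h3
    have hpos : 0 < Fintype.card p.Gal := Fintype.card_pos
    omega
  have hbij : Function.Bijective (Polynomial.Gal.galActionHom p K) := by
    rw [Fintype.bijective_iff_injective_and_card, hcardperm, h6]
    exact ⟨hinj, rfl⟩
  have e1 : p.Gal ≃* Equiv.Perm (p.rootSet K) := MulEquiv.ofBijective _ hbij
  have efin : p.rootSet K ≃ Fin 3 := Fintype.equivFinOfCardEq hcardroots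
  have e2 : Equiv.Perm (p.rootSet K) ≃* Equiv.Perm (Fin 3) :=
    { Equiv.permCongr efin with
      map_mul' := fun σ τ => by ext i; simp [Equiv.permCongr] }
  exact ⟨e1.trans e2⟩
end

section
/- Let w₁ and w₂ be distinct integers, each lying outside {0, 2}, such that 4w₁³ − 27 and 4w₂³ − 27 are both squarefree, and let θ₁, θ₂ be roots of x³ − w₁x − 1 and x³ − w₂x − 1 respectively. Then the cubic fields ℚ(θ₁) and ℚ(θ₂) are not isomorphic (in particular, ℚ(θ₁) ≠ ℚ(θ₂)). -/
open Polynomial IntermediateField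
open scoped Matrix

private noncomputable def fQ (w : ℤ) : ℚ[X] := X ^ 3 - C (w : ℚ) * X - 1

private lemma deg_aux {R : Type*} [Ring R] [Nontrivial R] (w : R) :
    degree (C w * X + 1) < 3 := by
  apply lt_of_le_of_lt (degree_add_le _ _)
  simp only [degree_one, max_lt_iff]
  exact ⟨lt_of_le_of_lt (degree_C_mul_X_le _) (by norm_num), by norm_num⟩

private lemma fQ_monic (w : ℤ) : (fQ w).Monic := by
  have := monic_X_pow_sub (p := C (w:ℚ) * X + 1) (n := 3) (deg_aux _)
  simpa [fQ, sub_sub] using this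

private lemma fQ_natDegree (w : ℤ) : (fQ w).natDegree = 3 := by
  unfold fQ
  compute_degree!

private lemma fQ_aeval {K : Type*} [Field K] [Algebra ℚ K] (w : ℤ) (θ : K)
    (hθ : θ ^ 3 = algebraMap ℚ K (w : ℚ) * θ + 1) : aeval θ (fQ w) = 0 := by
  simp only [fQ, map_sub, map_mul, map_pow, aeval_X, aeval_C, map_one]
  rw [hθ]; ring

private lemma fQ_irred (w : ℤ) (h0 : w ≠ 0) (h2 : w ≠ 2) : Irreducible (fQ w) := by
  rw [(fQ_monic w).irreducible_iff_roots_eq_zero_of_degree_le_three (by rw [fQ_natDegree]; norm_num)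
    (by rw [fQ_natDegree])]
  rw [Multiset.eq_zero_iff_forall_notMem]
  intro r hr
  rw [mem_roots (fQ_monic w).ne_zero, IsRoot.def] at hr
  have hr' : r ^ 3 - (w:ℚ) * r - 1 = 0 := by simpa [fQ] using hr
  have hint : IsIntegral ℤ r := by
    refine ⟨X ^ 3 - C w * X - 1, ?_, ?_⟩
    · have := monic_X_pow_sub (p := C w * X + 1) (n := 3) (deg_aux _)
      simpa [sub_sub] using this
    · rw [← aeval_def]
      simp only [map_sub, map_mul, map_pow, aeval_X, aeval_C, map_one, eq_intCast, map_intCast]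
      exact hr'
  obtain ⟨z, hz⟩ := IsIntegrallyClosed.isIntegral_iff.mp hint
  rw [eq_intCast] at hz
  rw [← hz] at hr'
  have hz' : z ^ 3 - w * z - 1 = 0 := by exact_mod_cast hr'
  have hunit : z * (z ^ 2 - w) = 1 := by linear_combination hz'
  have := Int.isUnit_iff.mp (IsUnit.of_mul_eq_one _ hunit)
  rcases this with h | h <;> subst h <;> omega

private lemma minpoly_fQ {K : Type*} [Field K] [Algebra ℚ K]
    (w : ℤ) (h0 : w ≠ 0) (h2 : w ≠ 2) (θ : K)
    (hθ : θ ^ 3 = algebraMap ℚ K (w : ℚ) * θ + 1) :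
    minpoly ℚ θ = fQ w :=
  (minpoly.eq_of_irreducible_of_monic (fQ_irred w h0 h2) (fQ_aeval w θ hθ) (fQ_monic w)).symm

private lemma exists_pow_basis {K : Type*} [Field K] [Algebra ℚ K] [FiniteDimensional ℚ K]
    (w : ℤ) (h0 : w ≠ 0) (h2 : w ≠ 2) (hrank : Module.finrank ℚ K = 3) (θ : K)
    (hθ : θ ^ 3 = algebraMap ℚ K (w : ℚ) * θ + 1) :
    ∃ B : Module.Basis (Fin 3) ℚ K, ⇑B = fun i : Fin 3 => θ ^ (i : ℕ) := by
  have hli := linearIndependent_pow (K := ℚ) θ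
  rw [minpoly_fQ w h0 h2 θ hθ, fQ_natDegree] at hli
  exact ⟨basisOfLinearIndependentOfCardEqFinrank hli (by simp [hrank]),
    coe_basisOfLinearIndependentOfCardEqFinrank _ _⟩

private lemma discr_pow {K : Type*} [Field K] [Algebra ℚ K] [FiniteDimensional ℚ K]
    (w : ℤ) (θ : K) (hθ : θ ^ 3 = algebraMap ℚ K (w : ℚ) * θ + 1)
    (B : Module.Basis (Fin 3) ℚ K) (hB : ⇑B = fun i : Fin 3 => θ ^ (i : ℕ)) :
    Algebra.discr ℚ (fun i : Fin 3 => θ ^ (i : ℕ)) = ((4 * w ^ 3 - 27 : ℤ) : ℚ) := by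
  have hrepr : ∀ (x : K) (a b c : ℚ), x = a • θ ^ 0 + b • θ ^ 1 + c • θ ^ 2 →
      ∀ j, B.repr x j = ![a, b, c] j := by
    intro x a b c hx j
    have hx' : x = a • B 0 + b • B 1 + c • B 2 := by simp only [hB]; simpa using hx
    rw [hx']
    simp only [map_add, map_smul, B.repr_self]
    fin_cases j <;> simp [Finsupp.single_apply]
  have r0 := hrepr (θ ^ 0) 1 0 0 (by simp)
  have r1 := hrepr (θ ^ 1) 0 1 0 (by simp)
  have r2 := hrepr (θ ^ 2) 0 0 1 (by simp)
  have r3 := hrepr (θ ^ 3) 1 (w : ℚ) 0 (by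
    simp only [pow_zero, pow_one, Algebra.smul_def, map_one, map_zero]
    linear_combination hθ)
  have r4 := hrepr (θ ^ 4) 0 1 (w : ℚ) (by
    simp only [pow_zero, pow_one, Algebra.smul_def, map_one, map_zero]
    linear_combination θ * hθ)
  have r5 := hrepr (θ ^ 5) (w : ℚ) ((w : ℚ) ^ 2) 1 (by
    simp only [pow_zero, pow_one, Algebra.smul_def, map_one, map_zero, map_pow]
    linear_combination (θ ^ 2 + algebraMap ℚ K (w : ℚ)) * hθ)
  have r6 := hrepr (θ ^ 6) 1 (2 * (w : ℚ)) ((w : ℚ) ^ 2) (by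
    simp only [pow_zero, pow_one, Algebra.smul_def, map_one, map_zero, map_pow, map_mul,
      map_ofNat]
    linear_combination (θ ^ 3 + algebraMap ℚ K (w : ℚ) * θ + 1) * hθ)
  have r0' := hrepr 1 1 0 0 (by simp)
  have r1' := hrepr θ 0 1 0 (by simp)
  have t : ∀ k : ℕ, Algebra.trace ℚ K (θ ^ k) =
      B.repr (θ ^ k) 0 + B.repr (θ ^ (k + 1)) 1 + B.repr (θ ^ (k + 2)) 2 := by
    intro k
    rw [Algebra.trace_eq_matrix_trace B, Matrix.trace, Fin.sum_univ_three]
    simp only [Matrix.diag, Algebra.leftMulMatrix_eq_repr_mul, hB]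
    norm_num [← pow_add, ← pow_succ]
  have T0 : Algebra.trace ℚ K (θ ^ 0) = 3 := by
    rw [t 0]; norm_num [r0', r1', r2, Matrix.cons_val_two]; try ring
  have T1 : Algebra.trace ℚ K (θ ^ 1) = 0 := by
    rw [t 1]; norm_num [r1', r2, r3, Matrix.cons_val_two]; try ring
  have T2 : Algebra.trace ℚ K (θ ^ 2) = 2 * (w : ℚ) := by
    rw [t 2]; norm_num [r2, r3, r4, Matrix.cons_val_two]; try ring
  have T3 : Algebra.trace ℚ K (θ ^ 3) = 3 := by
    rw [t 3]; norm_num [r3, r4, r5, Matrix.cons_val_two]; try ring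
  have T4 : Algebra.trace ℚ K (θ ^ 4) = 2 * (w : ℚ) ^ 2 := by
    rw [t 4]; norm_num [r4, r5, r6, Matrix.cons_val_two]; try ring
  have T0' : Algebra.trace ℚ K (1 : K) = 3 := by rw [← pow_zero θ]; exact T0
  have T1' : Algebra.trace ℚ K θ = 0 := by rw [← pow_one θ]; exact T1
  rw [Algebra.discr_def, Matrix.det_fin_three]
  simp only [Algebra.traceMatrix_apply, Algebra.traceForm_apply, ← pow_add]
  norm_num
  rw [T0', T1', T2, T3, T4]
  push_cast
  ring

private lemma sq_eq_of_squarefree (d₁ d₂ : ℤ) (h₁ : Squarefree d₁) (h₂ : Squarefree d₂) (q : ℚ)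
    (h : (d₁ : ℚ) = q ^ 2 * d₂) : d₁ = d₂ := by
  have hden : ((q.den : ℚ)) ≠ 0 := by exact_mod_cast q.den_nz
  have hqd : q * (q.den : ℚ) = q.num :=
    (((div_eq_iff hden).mp (Rat.num_div_den q)).symm)
  have hq : ((q.den : ℚ)) ^ 2 * (d₁ : ℚ) = ((q.num : ℚ)) ^ 2 * d₂ := by
    rw [h, ← hqd]; ring
  have hZ : (q.den : ℤ) ^ 2 * d₁ = q.num ^ 2 * d₂ := by exact_mod_cast hq
  have hcop : IsCoprime (q.num) (q.den : ℤ) := by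
    rw [Int.isCoprime_iff_gcd_eq_one]
    simpa [Int.gcd] using q.reduced
  have hdvd : ((q.den : ℤ)) ^ 2 ∣ q.num ^ 2 * d₂ := ⟨d₁, hZ.symm⟩
  have hdvd2 : ((q.den : ℤ)) ^ 2 ∣ d₂ := (hcop.symm.pow).dvd_of_dvd_mul_left hdvd
  rw [pow_two] at hdvd2
  have hden1 : (q.den : ℤ) = 1 := by
    have hu := h₂ (q.den : ℤ) hdvd2
    have hp : (0 : ℤ) < (q.den : ℤ) := by exact_mod_cast q.pos
    rcases Int.isUnit_iff.mp hu with h | h <;> omega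
  rw [hden1] at hZ
  simp only [one_pow, one_mul] at hZ
  have hnum : IsUnit q.num := h₁ q.num (by rw [← pow_two]; exact ⟨d₂, hZ⟩)
  rcases Int.isUnit_iff.mp hnum with h | h <;> rw [h] at hZ <;> simpa using hZ

theorem stmt_4 (w₁ w₂ : ℤ) (hne : w₁ ≠ w₂)
    (h10 : w₁ ≠ 0) (h12 : w₁ ≠ 2) (h20 : w₂ ≠ 0) (h22 : w₂ ≠ 2)
    (hsf₁ : Squarefree (4 * w₁ ^ 3 - 27)) (hsf₂ : Squarefree (4 * w₂ ^ 3 - 27))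
    (θ₁ θ₂ : ℂ)
    (hθ₁ : aeval θ₁ (X ^ 3 - C w₁ * X - 1 : ℤ[X]) = 0)
    (hθ₂ : aeval θ₂ (X ^ 3 - C w₂ * X - 1 : ℤ[X]) = 0) :
    ¬ Nonempty
      ((IntermediateField.adjoin ℚ {θ₁} : IntermediateField ℚ ℂ) ≃ₐ[ℚ]
        (IntermediateField.adjoin ℚ {θ₂} : IntermediateField ℚ ℂ)) := by
  rintro ⟨σ⟩
  -- the complex relations
  have hc₁ : θ₁ ^ 3 = algebraMap ℚ ℂ ((w₁ : ℚ)) * θ₁ + 1 := by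
    simp only [map_sub, map_mul, map_pow, aeval_X, aeval_C, map_one, eq_intCast,
      map_intCast] at hθ₁
    have : algebraMap ℚ ℂ ((w₁ : ℚ)) = (w₁ : ℂ) := by push_cast [eq_ratCast]; norm_num
    rw [this]; linear_combination hθ₁
  have hc₂ : θ₂ ^ 3 = algebraMap ℚ ℂ ((w₂ : ℚ)) * θ₂ + 1 := by
    simp only [map_sub, map_mul, map_pow, aeval_X, aeval_C, map_one, eq_intCast,
      map_intCast] at hθ₂
    have : algebraMap ℚ ℂ ((w₂ : ℚ)) = (w₂ : ℂ) := by push_cast [eq_ratCast]; norm_num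
    rw [this]; linear_combination hθ₂
  have hint₁ : IsIntegral ℚ θ₁ := ⟨fQ w₁, fQ_monic w₁, by
    rw [← aeval_def]; exact fQ_aeval w₁ θ₁ hc₁⟩
  have hint₂ : IsIntegral ℚ θ₂ := ⟨fQ w₂, fQ_monic w₂, by
    rw [← aeval_def]; exact fQ_aeval w₂ θ₂ hc₂⟩
  haveI fd₁ := IntermediateField.adjoin.finiteDimensional hint₁
  haveI fd₂ := IntermediateField.adjoin.finiteDimensional hint₂
  have hrank₂ : Module.finrank ℚ ℚ⟮θ₂⟯ = 3 := by
    rw [IntermediateField.adjoin.finrank hint₂, minpoly_fQ w₂ h20 h22 θ₂ hc₂, fQ_natDegree]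
  -- generators and their relations
  set g₁ := IntermediateField.AdjoinSimple.gen ℚ θ₁ with hg₁def
  set g₂ := IntermediateField.AdjoinSimple.gen ℚ θ₂ with hg₂def
  have hinj : Function.Injective (algebraMap ℚ⟮θ₂⟯ ℂ) := (algebraMap ℚ⟮θ₂⟯ ℂ).injective
  have hinj₁ : Function.Injective (algebraMap ℚ⟮θ₁⟯ ℂ) := (algebraMap ℚ⟮θ₁⟯ ℂ).injective
  have hg₁ : g₁ ^ 3 = algebraMap ℚ _ ((w₁ : ℚ)) * g₁ + 1 := by
    apply hinj₁
    rw [map_pow, map_add, map_mul, map_one, IntermediateField.AdjoinSimple.algebraMap_gen,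
      ← IsScalarTower.algebraMap_apply]
    exact hc₁
  have hg₂ : g₂ ^ 3 = algebraMap ℚ _ ((w₂ : ℚ)) * g₂ + 1 := by
    apply hinj
    rw [map_pow, map_add, map_mul, map_one, IntermediateField.AdjoinSimple.algebraMap_gen,
      ← IsScalarTower.algebraMap_apply]
    exact hc₂
  set α := σ g₁ with hαdef
  have hα : α ^ 3 = algebraMap ℚ ℚ⟮θ₂⟯ ((w₁ : ℚ)) * α + 1 := by
    have := congrArg σ hg₁
    simpa [map_pow, map_add, map_mul, map_one, AlgEquiv.commutes] using this
  obtain ⟨B₂, hB₂⟩ := exists_pow_basis w₂ h20 h22 hrank₂ g₂ hg₂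
  obtain ⟨Bα, hBα⟩ := exists_pow_basis w₁ h10 h12 hrank₂ α hα
  have dα := discr_pow w₁ α hα Bα hBα
  have d₂ := discr_pow w₂ g₂ hg₂ B₂ hB₂
  set P : Matrix (Fin 3) (Fin 3) ℚ := Matrix.of fun j i : Fin 3 => B₂.repr (α ^ (i : ℕ)) j
    with hPdef
  have hvec : (⇑B₂) ᵥ* P.map (algebraMap ℚ ℚ⟮θ₂⟯) = fun i : Fin 3 => α ^ (i : ℕ) := by
    funext i
    have hs := B₂.sum_repr (α ^ (i : ℕ))
    simp only [Matrix.vecMul, dotProduct, Matrix.map_apply, Matrix.of_apply, hPdef]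
    conv_rhs => rw [← hs]
    refine Finset.sum_congr rfl fun j _ => ?_
    rw [Algebra.smul_def, mul_comm]
  have key : ((4 * w₁ ^ 3 - 27 : ℤ) : ℚ) = P.det ^ 2 * ((4 * w₂ ^ 3 - 27 : ℤ) : ℚ) := by
    calc ((4 * w₁ ^ 3 - 27 : ℤ) : ℚ) = Algebra.discr ℚ (fun i : Fin 3 => α ^ (i : ℕ)) := dα.symm
      _ = Algebra.discr ℚ ((⇑B₂) ᵥ* P.map (algebraMap ℚ ℚ⟮θ₂⟯)) := by rw [hvec]
      _ = P.det ^ 2 * Algebra.discr ℚ (⇑B₂) := Algebra.discr_of_matrix_vecMul (⇑B₂) P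
      _ = P.det ^ 2 * ((4 * w₂ ^ 3 - 27 : ℤ) : ℚ) := by rw [hB₂, d₂]
  have heq := sq_eq_of_squarefree _ _ hsf₁ hsf₂ P.det key
  have hcube : w₁ ^ 3 = w₂ ^ 3 := by linarith
  exact hne (((Odd.strictMono_pow (R := ℤ) ⟨1, by norm_num⟩).injective) hcube)
end

section
/- Let a and b be positive integers with b ≥ 2. Then the trinomial f_{a,b}(x) := x³ − 2^{2a}x − 3^{b−1} is irreducible over ℚ if and only if (a,b) ≠ (1,2); moreover, f_{1,2}(x) = (x + 1)(x² − x − 3). -/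
open Polynomial

lemma pow3mod8 (m : ℕ) : 3^m % 8 = 1 ∨ 3^m % 8 = 3 := by
  induction m with
  | zero => left; rfl
  | succ n ih =>
    have : 3^(n+1) % 8 = (3^n % 8) * 3 % 8 := by
      rw [pow_succ, Nat.mul_mod]
    rcases ih with h | h <;> omega

lemma pow4mod3 (a : ℕ) : 4^a % 3 = 1 := by
  rw [Nat.pow_mod]; simp

lemma pow9mod8 (k : ℕ) : 3^(2*k) % 8 = 1 := by
  rw [pow_mul]
  norm_num [Nat.pow_mod]

lemma pow4ge (a : ℕ) (ha : 1 ≤ a) : 4 ≤ 4^a := by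
  calc 4 = 4^1 := (pow_one 4).symm
  _ ≤ 4^a := Nat.pow_le_pow_right (by norm_num) ha

lemma key1 (a k m : ℕ) (ha : 1 ≤ a) : 3^(2*k) ≠ 4^a + 3^m := by
  intro h
  rcases Nat.eq_zero_or_pos k with rfl | hk
  · have h4 := pow4ge a ha
    have h3 : 1 ≤ 3^m := Nat.one_le_pow _ _ (by norm_num)
    simp at h; omega
  · have h1 : 3^(2*k) % 3 = 0 := by
      have : 3 ∣ 3^(2*k) := dvd_pow_self 3 (by omega)
      omega
    have h2 : 4^a % 3 = 1 := pow4mod3 a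
    have h3 : 3^m % 3 = 0 ∨ 3^m % 3 = 1 := by
      rcases Nat.eq_zero_or_pos m with rfl | hm
      · right; rfl
      · left; have : 3 ∣ 3^m := dvd_pow_self 3 (by omega); omega
    omega

lemma key2 (a k m : ℕ) (ha : 1 ≤ a) (h : 4^a = 3^(2*k) + 3^m) :
    a = 1 ∧ k = 0 ∧ m = 1 := by
  have h2 : 4^a % 3 = 1 := pow4mod3 a
  rcases Nat.eq_zero_or_pos k with rfl | hk
  · -- 4^a = 1 + 3^m
    simp at h
    rcases Nat.eq_zero_or_pos m with rfl | hm
    · -- 4^a = 2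
      exfalso
      have : 4 ∣ 4^a := dvd_pow_self 4 (by omega)
      simp at h; omega
    · -- m ≥ 1
      rcases Nat.lt_or_ge a 2 with ha2 | ha2
      · have : a = 1 := by omega
        subst this
        norm_num at h
        have : 3^m = 3^1 := by rw [pow_one]; omega
        have := Nat.pow_right_injective (by norm_num) this
        exact ⟨rfl, rfl, by omega⟩
      · exfalso
        have h8 : 4^a % 8 = 0 := by
          have : (8:ℕ) ∣ 4^a := by
            calc (8:ℕ) ∣ 4^2 := by norm_num
            _ ∣ 4^a := pow_dvd_pow 4 ha2
          omega
        rcases pow3mod8 m with h3 | h3 <;> omega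
  · rcases Nat.eq_zero_or_pos m with rfl | hm
    · -- 4^a = 3^(2k) + 1
      exfalso
      rcases Nat.lt_or_ge a 2 with ha2 | ha2
      · have : a = 1 := by omega
        subst this
        have h9 : 9 ≤ 3^(2*k) := by
          calc (9:ℕ) = 3^(2*1) := by norm_num
          _ ≤ 3^(2*k) := Nat.pow_le_pow_right (by norm_num) (by omega)
        simp at h; omega
      · have h8 : 4^a % 8 = 0 := by
          have : (8:ℕ) ∣ 4^a := by
            calc (8:ℕ) ∣ 4^2 := by norm_num
            _ ∣ 4^a := pow_dvd_pow 4 ha2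
          omega
        have := pow9mod8 k
        simp at h; omega
    · exfalso
      have h1 : 3^(2*k) % 3 = 0 := by
        have : 3 ∣ 3^(2*k) := dvd_pow_self 3 (by omega); omega
      have h3 : 3^m % 3 = 0 := by
        have : 3 ∣ 3^m := dvd_pow_self 3 (by omega); omega
      omega

lemma key3 (a b : ℕ) (ha : 1 ≤ a) (hb : 2 ≤ b) (hab : ¬(a = 1 ∧ b = 2)) (x : ℤ) :
    x^3 - 2^(2*a)*x - 3^(b-1) ≠ 0 := by
  intro h
  have h4 : (2:ℤ)^(2*a) = 4^a := by rw [pow_mul]; norm_num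
  have heq : x * (x^2 - 4^a) = 3^(b-1) := by rw [← h4]; linear_combination h
  have hdvd : x ∣ (3:ℤ)^(b-1) := ⟨_, heq.symm⟩
  have hnd : x.natAbs ∣ 3^(b-1) := by
    have := Int.natAbs_dvd_natAbs.mpr hdvd
    simpa [Int.natAbs_pow] using this
  obtain ⟨k, hk, hxk⟩ := (Nat.dvd_prime_pow Nat.prime_three).mp hnd
  have hx2 : x = 3^k ∨ x = -(3^k) := by
    rcases Int.natAbs_eq x with h1 | h1 <;> [left; right] <;> rw [h1, hxk] <;> push_cast <;> ring
  -- cancel 3^k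
  have h3k : (0:ℤ) < 3^k := by positivity
  rcases hx2 with rfl | rfl
  · -- 3^k (3^(2k) - 4^a) = 3^(b-1) = 3^k * 3^(b-1-k)
    have hsplit : (3:ℤ)^(b-1) = 3^k * 3^(b-1-k) := by
      rw [← pow_add]; congr 1; omega
    have hc : (3:ℤ)^(2*k) - 4^a = 3^(b-1-k) := by
      have h2 : (3:ℤ)^(2*k) = 3^k * 3^k := by rw [two_mul, pow_add]
      apply mul_left_cancel₀ (a := (3:ℤ)^k) (by positivity)
      rw [← hsplit, h2]
      linear_combination heq
    have : (3:ℤ)^(2*k) = 4^a + 3^(b-1-k) := by linarith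
    have hnat : (3:ℕ)^(2*k) = 4^a + 3^(b-1-k) := by exact_mod_cast this
    exact key1 a k (b-1-k) ha hnat
  · have hsplit : (3:ℤ)^(b-1) = 3^k * 3^(b-1-k) := by
      rw [← pow_add]; congr 1; omega
    have hc : (4:ℤ)^a - 3^(2*k) = 3^(b-1-k) := by
      have h2 : (3:ℤ)^(2*k) = 3^k * 3^k := by rw [two_mul, pow_add]
      apply mul_left_cancel₀ (a := (3:ℤ)^k) (by positivity)
      rw [← hsplit, h2]
      linear_combination heq
    have : (4:ℤ)^a = 3^(2*k) + 3^(b-1-k) := by linarith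
    have hnat : (4:ℕ)^a = 3^(2*k) + 3^(b-1-k) := by exact_mod_cast this
    obtain ⟨ha1, hk0, hm1⟩ := key2 a k (b-1-k) ha hnat
    exact hab ⟨ha1, by omega⟩

theorem stmt_5 (a b : ℕ) (ha : 1 ≤ a) (hb : 2 ≤ b) :
    (Irreducible
        ((X ^ 3 - C ((2 : ℤ) ^ (2 * a)) * X - C ((3 : ℤ) ^ (b - 1))).map
          (algebraMap ℤ ℚ)) ↔ (a, b) ≠ (1, 2)) ∧
      (X ^ 3 - C ((2 : ℤ) ^ (2 * 1)) * X - C ((3 : ℤ) ^ (2 - 1)) : ℤ[X]) =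
        (X + 1) * (X ^ 2 - X - C 3) := by
  constructor
  · set p : ℤ[X] := X ^ 3 - C ((2 : ℤ) ^ (2 * a)) * X - C ((3 : ℤ) ^ (b - 1)) with hp
    have hpm : p.Monic := by unfold p; monicity!
    have hpd : p.natDegree = 3 := by unfold p; compute_degree!
    have hqm : (p.map (algebraMap ℤ ℚ)).Monic := hpm.map (algebraMap ℤ ℚ)
    have hqd : (p.map (algebraMap ℤ ℚ)).natDegree = 3 := by
      rw [hpm.natDegree_map]; exact hpd
    rw [hqm.irreducible_iff_roots_eq_zero_of_degree_le_three (by omega) (by omega)]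
    constructor
    · rintro hroots hpair
      rw [Prod.ext_iff] at hpair
      obtain ⟨ha1, hb2⟩ := hpair
      simp only at ha1 hb2
      subst ha1; subst hb2
      have hmem : (-1 : ℚ) ∈ (p.map (algebraMap ℤ ℚ)).roots := by
        rw [mem_roots hqm.ne_zero]
        simp only [hp, IsRoot, Polynomial.map_sub, Polynomial.map_mul, Polynomial.map_pow,
          map_X, map_C, eval_sub, eval_mul, eval_pow, eval_X, eval_C]
        norm_num
      rw [hroots] at hmem
      simp at hmem
    · intro hne
      rw [Multiset.eq_zero_iff_forall_notMem]
      intro r hr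
      rw [mem_roots hqm.ne_zero] at hr
      have haev : aeval r p = 0 := by
        rw [aeval_def, ← eval_map]; exact hr
      obtain ⟨x, hx⟩ := isInteger_of_is_root_of_monic hpm haev
      have hev : eval x p = 0 := by
        have : aeval ((algebraMap ℤ ℚ) x) p = 0 := by rw [hx]; exact haev
        rw [aeval_algebraMap_eq_zero_iff] at this
        simpa using this
      have : x^3 - 2^(2*a)*x - 3^(b-1) = 0 := by
        simpa [hp, eval_sub, eval_mul, eval_pow] using hev
      exact key3 a b ha hb (by simp [Prod.ext_iff] at hne; omega) x this
  · have h2 : ((2:ℤ) ^ (2*1)) = 4 := by norm_num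
    have h3 : ((3:ℤ) ^ (2-1)) = 3 := by norm_num
    rw [h2, h3, show ((4:ℤ)) = ((4:ℤ)) from rfl]
    rw [show (C (4:ℤ)) = (4:ℤ[X]) by simp, show (C (3:ℤ)) = (3:ℤ[X]) by simp]
    ring
end

section
/- Let a and b be positive integers with b ≥ 2 and (a,b) ≠ (1,2) such that δ := 2^{6a+2} − 3^{2b+1} is negative and squarefree. Then the Galois group over ℚ of the splitting field of f_{a,b}(x) := x³ − 2^{2a}x − 3^{b−1} is isomorphic to the symmetric group S₃. -/
open Polynomial

noncomputable def permMulEquiv {α β : Type*} (e : α ≃ β) : Equiv.Perm α ≃* Equiv.Perm β :=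
  { e.permCongr with
    map_mul' := fun p q => by
      ext x
      simp [Equiv.permCongr_apply] }

lemma no_int_root (a' b' : ℕ)
    (hδneg : (2 : ℤ) ^ (6 * (a'+1) + 2) - 3 ^ (2 * (b'+2) + 1) < 0)
    (hδsf : Squarefree ((2 : ℤ) ^ (6 * (a'+1) + 2) - 3 ^ (2 * (b'+2) + 1)))
    (n : ℤ) (hn : n ^ 3 = 2 ^ (2*a'+2) * n + 3 ^ (b'+1)) : False := by
  have hB : (3:ℤ)^(b'+1) = n^3 - 2^(2*a'+2)*n := by linarith
  have hdvd : (3*n^2 - 2^(2*a'+2)) * (3*n^2 - 2^(2*a'+2)) ∣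
      ((2 : ℤ) ^ (6 * (a'+1) + 2) - 3 ^ (2 * (b'+2) + 1)) := by
    refine ⟨2^(2*a'+4) - 3*n^2, ?_⟩
    rw [show (3:ℤ) ^ (2 * (b'+2) + 1) = 27 * ((3:ℤ)^(b'+1))^2 by ring, hB]
    ring
  have hu := hδsf _ hdvd
  rw [Int.isUnit_iff] at hu
  rcases hu with hu | hu
  · have h3 := congrArg (fun z : ℤ => (z : ZMod 3)) hu
    push_cast at h3
    rw [show 2*a'+2 = 2*(a'+1) by ring, pow_mul] at h3
    simp only [show ((2:ZMod 3))^2 = 1 by decide, one_pow,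
      show ((3:ZMod 3)) = 0 by decide, zero_mul, zero_sub] at h3
    exact absurd h3 (by decide)
  · have hA : (2:ℤ)^(2*a'+2) = 3*n^2 + 1 := by linarith
    rcases Nat.eq_zero_or_pos a' with rfl | ha'
    · norm_num at hA
      have h1 : n^2 = 1 := by linarith
      have h2 : (n-1)*(n+1) = 0 := by linear_combination h1
      have hp : (0:ℤ) < 3^(b'+1) := by positivity
      rcases mul_eq_zero.mp h2 with h | h
      · have hn1 : n = 1 := by linarith
        subst hn1; norm_num at hn; linarith
      · have hn1 : n = -1 := by linarith
        subst hn1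
        norm_num at hn
        have h3 : (3:ℕ)^(b'+1) = 3^1 := by exact_mod_cast (by linarith : (3:ℤ)^(b'+1) = 3^1)
        have := Nat.pow_right_injective (by norm_num) h3
        obtain rfl : b' = 0 := by omega
        norm_num at hδneg
    · obtain ⟨a'', rfl⟩ : ∃ a'', a' = a'' + 1 := ⟨a'-1, by omega⟩
      have h8 := congrArg (fun z : ℤ => (z : ZMod 8)) hA
      push_cast at h8
      rw [show 2*(a''+1)+2 = 3 + (2*a''+1) by ring, pow_add] at h8
      simp only [show (2:ZMod 8)^3 = 0 by decide, zero_mul] at h8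
      have hall : ∀ x : ZMod 8, 3*x^2 + 1 ≠ 0 := by decide
      exact hall _ h8.symm

theorem stmt_8 (a b : ℕ) (ha : 1 ≤ a) (hb : 2 ≤ b) (hab : (a, b) ≠ (1, 2))
    (hδneg : (2 : ℤ) ^ (6 * a + 2) - 3 ^ (2 * b + 1) < 0)
    (hδsf : Squarefree ((2 : ℤ) ^ (6 * a + 2) - 3 ^ (2 * b + 1))) :
    Nonempty
      ((X ^ 3 - C ((2 : ℚ) ^ (2 * a)) * X - C ((3 : ℚ) ^ (b - 1)) : ℚ[X]).Gal ≃*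
        Equiv.Perm (Fin 3)) := by
  obtain ⟨a', rfl⟩ : ∃ a', a = a' + 1 := ⟨a-1, by omega⟩
  obtain ⟨b', rfl⟩ : ∃ b', b = b' + 2 := ⟨b-2, by omega⟩
  rw [show b' + 2 - 1 = b' + 1 by omega, show 2 * (a' + 1) = 2*a'+2 by ring]
  set f : ℚ[X] := X ^ 3 - C ((2 : ℚ) ^ (2*a'+2)) * X - C ((3 : ℚ) ^ (b' + 1)) with hf
  have hfm : f.Monic := by
    unfold f
    monicity!
  have hdeg : f.natDegree = 3 := by
    unfold f
    compute_degree!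
  -- evaluation formula
  have heval : ∀ q : ℚ, f.eval q = q^3 - (2:ℚ)^(2*a'+2) * q - (3:ℚ)^(b'+1) := by
    intro q; simp [hf]
  -- irreducibility
  have hirr : Irreducible f := by
    rw [irreducible_iff_roots_eq_zero_of_degree_le_three (by omega) (by omega),
      Multiset.eq_zero_iff_forall_notMem]
    intro q hq
    rw [mem_roots hfm.ne_zero, IsRoot, heval] at hq
    -- q is an algebraic integer
    have hint : IsIntegral ℤ q := by
      refine ⟨X ^ 3 - C ((2:ℤ) ^ (2*a'+2)) * X - C ((3:ℤ) ^ (b' + 1)), by monicity!, ?_⟩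
      rw [← aeval_def]
      simp only [map_sub, map_mul, map_pow, aeval_X, aeval_C, map_ofNat, eq_intCast]
      linear_combination hq
    obtain ⟨n, rfl⟩ := IsIntegrallyClosed.isIntegral_iff.mp hint
    rw [algebraMap_int_eq, eq_intCast] at hq
    have hn : n ^ 3 = 2 ^ (2*a'+2) * n + 3 ^ (b'+1) := by
      have : ((n:ℚ))^3 = (2:ℚ)^(2*a'+2) * n + (3:ℚ)^(b'+1) := by linear_combination hq
      exact_mod_cast this
    exact no_int_root a' b' hδneg hδsf n hn
  -- at most one real root (two distinct real roots force nonnegative discriminant)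
  have hR : Fintype.card (f.rootSet ℝ) ≤ 2 := by
    by_contra hcard
    obtain ⟨x, y, hxy⟩ := Fintype.exists_pair_of_one_lt_card
      (by omega : 1 < Fintype.card (f.rootSet ℝ))
    have hx := (mem_rootSet.mp x.2).2
    have hy := (mem_rootSet.mp y.2).2
    have hxy' : (x : ℝ) ≠ (y : ℝ) := fun h => hxy (Subtype.ext h)
    set r : ℝ := (x : ℝ)
    set s : ℝ := (y : ℝ)
    have hr : r^3 - (2:ℝ)^(2*a'+2) * r - (3:ℝ)^(b'+1) = 0 := by
      have := hx; rw [hf] at this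
      simpa using this
    have hs : s^3 - (2:ℝ)^(2*a'+2) * s - (3:ℝ)^(b'+1) = 0 := by
      have := hy; rw [hf] at this
      simpa using this
    set A : ℝ := (2:ℝ)^(2*a'+2) with hA
    set B : ℝ := (3:ℝ)^(b'+1) with hB
    have hrs : (r - s) * (r^2 + r*s + s^2 - A) = 0 := by linear_combination hr - hs
    have hA1 : A = r^2 + r*s + s^2 := by
      rcases mul_eq_zero.mp hrs with h | h
      · exact absurd (by linarith : r = s) hxy'
      · linarith
    have hB1 : B = r^3 - A*r := by linarith
    have hsq : 4*A^3 - 27*B^2 = ((r-s)*(r+2*s)*(2*r+s))^2 := by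
      rw [hB1, hA1]; ring
    have hδR : 4*A^3 - 27*B^2 < 0 := by
      have hcast : ((2:ℝ)) ^ (6 * (a'+1) + 2) - 3 ^ (2 * (b'+2) + 1) < 0 := by
        exact_mod_cast hδneg
      have e1 : 4*A^3 = (2:ℝ) ^ (6 * (a'+1) + 2) := by rw [hA]; ring
      have e2 : 27*B^2 = (3:ℝ) ^ (2 * (b'+2) + 1) := by rw [hB]; ring
      linarith
    nlinarith [sq_nonneg ((r-s)*(r+2*s)*(2*r+s))]
  -- number of complex roots
  have hC : Fintype.card (f.rootSet ℂ) = 3 := by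
    rw [card_rootSet_eq_natDegree hirr.separable (IsAlgClosed.splits (f.map (algebraMap ℚ ℂ))), hdeg]
  have hbij := Polynomial.Gal.galActionHom_bijective_of_prime_degree' hirr
    (by rw [hdeg]; exact Nat.prime_three) (by omega) (by omega)
  exact ⟨(MulEquiv.ofBijective _ hbij).trans (permMulEquiv (Fintype.equivFinOfCardEq hC))⟩
end

section
/- Let a and b be positive integers with b ≥ 2 and (a,b) ≠ (1,2), and define g_{a,b}(x) := x³ − 2^{2a}·3^{2b−2}x − 3^{4b−4}. Then g_{a,b}(x) is irreducible over ℚ but is not monogenic; moreover, if θ is a root of f_{a,b}(x) := x³ − 2^{2a}x − 3^{b−1}, then 3^{b−1}θ is a root of g_{a,b}(x), so that f_{a,b} and g_{a,b} generate the same cubic field ℚ(θ). -/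
open Polynomial

/-- A monic polynomial `f ∈ ℤ[x]` is monogenic if it is irreducible over `ℚ` and
`ℤ[θ]` is the ring of integers (the integral closure of `ℤ`) of `ℚ(θ)`, where `θ`
is a root of `f`. -/
def IsMonogenic (f : Polynomial ℤ) : Prop :=
  f.Monic ∧ Irreducible (f.map (algebraMap ℤ ℚ)) ∧
    Algebra.adjoin ℤ {AdjoinRoot.root (f.map (algebraMap ℤ ℚ))} =
      integralClosure ℤ (AdjoinRoot (f.map (algebraMap ℤ ℚ)))

lemma pow4_zmod5 (s : ℕ) : (4:ZMod 5)^s = 1 ∨ (4:ZMod 5)^s = 4 := by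
  induction s with
  | zero => left; rfl
  | succ n ih => rcases ih with h|h <;> rw [pow_succ, h] <;> [right; left] <;> decide

lemma pow3_zmod16 (s : ℕ) :
    (3:ZMod 16)^s = 1 ∨ (3:ZMod 16)^s = 3 ∨ (3:ZMod 16)^s = 9 ∨ (3:ZMod 16)^s = 11 := by
  induction s with
  | zero => left; rfl
  | succ n ih => rcases ih with h|h|h|h <;> rw [pow_succ, h] <;> decide

lemma unit_of_dvd_pow3 (F : ℤ) (N : ℕ) (h : F ∣ 3^N) (h3 : ¬ (3:ℤ) ∣ F) :
    F = 1 ∨ F = -1 := by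
  have hna : F.natAbs ∣ 3^N := by
    have := Int.natAbs_dvd_natAbs.mpr h
    simpa [Int.natAbs_pow] using this
  obtain ⟨j, hj, hF⟩ := (Nat.dvd_prime_pow Nat.prime_three).mp hna
  rcases Nat.eq_zero_or_pos j with rfl | hj0
  · exact Int.natAbs_eq_iff.mp (by simpa using hF)
  · exfalso
    apply h3
    apply Int.dvd_natAbs.mp
    have : (3:ℕ) ∣ F.natAbs := hF ▸ dvd_pow_self 3 (by omega)
    exact_mod_cast this

lemma pow41 : ∀ a : ℕ, 1 ≤ a → ¬ ((2:ℤ)^(2*a) - 1 = 3^(a+1)) → True := fun _ _ _ => trivial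

lemma zmod5_helper (m e : ℕ) (h : (9:ℤ)^m - 4^e = 1 ∨ (9:ℤ)^m - 4^e = -1) : False := by
  have h5 : (9:ZMod 5)^m - 4^e = 1 ∨ (9:ZMod 5)^m - 4^e = -1 := by
    rcases h with h|h <;> [left; right] <;>
    · have := congrArg (fun z:ℤ => (z : ZMod 5)) h
      push_cast at this
      exact_mod_cast this
  rw [show (9:ZMod 5) = 4 from by decide] at h5
  rcases pow4_zmod5 m with h1|h1 <;> rcases pow4_zmod5 e with h2|h2 <;>
    rw [h1, h2] at h5 <;> revert h5 <;> decide


lemma no_int_root_s10 (a d : ℕ) (ha : 1 ≤ a) (had : ¬ (a = 1 ∧ d = 0)) (n : ℤ) :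
    n^3 - 2^(2*a)*3^(2*d+2)*n - 3^(4*d+4) ≠ 0 := by
  intro hzero
  have hn : n * (n^2 - 2^(2*a)*3^(2*d+2)) = 3^(4*d+4) := by linear_combination hzero
  have hdvd : n ∣ (3:ℤ)^(4*d+4) := ⟨_, hn.symm⟩
  have hna : n.natAbs ∣ 3^(4*d+4) := by
    have := Int.natAbs_dvd_natAbs.mpr hdvd
    simpa [Int.natAbs_pow] using this
  obtain ⟨k, hk, hkabs⟩ := (Nat.dvd_prime_pow Nat.prime_three).mp hna
  have hsgn : n = 3^k ∨ n = -(3^k) := by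
    rcases Int.natAbs_eq n with h|h
    · left; rw [h, hkabs]; push_cast; ring
    · right; rw [h, hkabs]; push_cast; ring
  have hn2 : n^2 = 3^(2*k) := by
    rcases hsgn with rfl|rfl <;> rw [show 2*k = k*2 from by ring, pow_mul] <;> ring
  have h4le : (4:ℤ) ≤ 2^(2*a) := by
    calc (4:ℤ) = 2^2 := by norm_num
    _ ≤ 2^(2*a) := pow_le_pow_right₀ (by norm_num) (by omega)
  rcases lt_trichotomy k (d+1) with hlt | heq | hgt
  · -- k < d+1
    set F : ℤ := 1 - 2^(2*a)*3^(2*(d+1-k)) with hFdef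
    have hD : n^2 - 2^(2*a)*3^(2*d+2) = 3^(2*k) * F := by
      rw [hn2, hFdef]
      have : (3:ℤ)^(2*k) * 3^(2*(d+1-k)) = 3^(2*d+2) := by
        rw [← pow_add]; congr 1; omega
      linear_combination 2^(2*a) * this
    have hFd : F ∣ (3:ℤ)^(4*d+4) := ⟨n * 3^(2*k), by rw [← hn, hD]; ring⟩
    have hF3 : ¬ (3:ℤ) ∣ F := by
      intro h3F
      have h3e : (3:ℤ) ∣ 2^(2*a)*3^(2*(d+1-k)) :=
        Dvd.dvd.mul_left (dvd_pow_self _ (by omega)) _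
      have h1 : (3:ℤ) ∣ 1 := by
        have hFX : F + 2^(2*a)*3^(2*(d+1-k)) = 1 := by rw [hFdef]; ring
        simpa [hFX] using dvd_add h3F h3e
      norm_num at h1
    have h3ge : (3:ℤ) ≤ 3^(2*(d+1-k)) := by
      calc (3:ℤ) = 3^1 := by norm_num
      _ ≤ 3^(2*(d+1-k)) := pow_le_pow_right₀ (by norm_num) (by omega)
    rcases unit_of_dvd_pow3 F _ hFd hF3 with h|h <;> rw [hFdef] at h <;> nlinarith
  · -- k = d+1
    subst heq
    have hkey : (2:ℤ)^(2*a) - 1 = 3^(d+1) := by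
      rcases hsgn with h|h
      · exfalso
        rw [h] at hn
        have key2 : (3:ℤ)^(d+1)*3^(2*d+2)*(1 - 2^(2*a)) = 3^(4*d+4) := by
          linear_combination hn
        have h1 : (0:ℤ) < 3^(d+1) := by positivity
        have h2 : (0:ℤ) < 3^(2*d+2) := by positivity
        have h3 : (0:ℤ) < 3^(4*d+4) := by positivity
        nlinarith [mul_pos h1 h2]
      · rw [h] at hn
        have hmul : (3:ℤ)^(3*d+3) * ((2:ℤ)^(2*a) - 1) = 3^(3*d+3) * 3^(d+1) := by
          rw [← pow_add, show 3*d+3+(d+1) = 4*d+4 from by omega]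
          linear_combination hn
        exact mul_left_cancel₀ (by positivity) hmul
    rcases Nat.lt_or_ge a 2 with ha2 | ha2
    · -- a = 1
      have ha1 : a = 1 := by omega
      subst ha1
      norm_num at hkey
      have : (3:ℕ)^(d+1) = 3^1 := by exact_mod_cast hkey.symm
      have := Nat.pow_right_injective (by norm_num) this
      exact had ⟨rfl, by omega⟩
    · -- a ≥ 2 : mod 16
      have h16 := congrArg (fun z : ℤ => (z : ZMod 16)) hkey
      push_cast at h16
      have h20 : (2:ZMod 16)^(2*a) = 0 := by
        rw [show 2*a = 4+(2*a-4) from by omega, pow_add,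
          show ((2:ZMod 16)^4) = 0 from by decide, zero_mul]
      rw [h20] at h16
      rcases pow3_zmod16 (d+1) with h|h|h|h <;> rw [h] at h16 <;> revert h16 <;> decide
  · -- k > d+1
    set F : ℤ := 3^(2*(k-(d+1))) - 2^(2*a) with hFdef
    have hD : n^2 - 2^(2*a)*3^(2*d+2) = 3^(2*d+2) * F := by
      rw [hn2, hFdef]
      have : (3:ℤ)^(2*d+2) * 3^(2*(k-(d+1))) = 3^(2*k) := by
        rw [← pow_add]; congr 1; omega
      linear_combination -this
    have hFd : F ∣ (3:ℤ)^(4*d+4) := ⟨n * 3^(2*d+2), by rw [← hn, hD]; ring⟩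
    have hF3 : ¬ (3:ℤ) ∣ F := by
      intro h3F
      have h3e : (3:ℤ) ∣ 3^(2*(k-(d+1))) := dvd_pow_self _ (by omega)
      have h2 : (3:ℤ) ∣ 2^(2*a) := by
        have hFX : 3^(2*(k-(d+1))) - F = 2^(2*a) := by rw [hFdef]; ring
        simpa [hFX] using dvd_sub h3e h3F
      have := Int.prime_three.dvd_of_dvd_pow h2
      norm_num at this
    have hF9 : F = 9^(k-(d+1)) - 4^a := by
      rw [hFdef, show (3:ℤ)^(2*(k-(d+1))) = 9^(k-(d+1)) from by rw [pow_mul]; norm_num,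
        show (2:ℤ)^(2*a) = 4^a from by rw [pow_mul]; norm_num]
    apply zmod5_helper (k-(d+1)) a
    rcases unit_of_dvd_pow3 F _ hFd hF3 with h|h <;> rw [hF9] at h <;> [left; right] <;> exact h

lemma g_monic (A B : ℤ) : (X^3 - C A * X - C B).Monic := by monicity!

lemma not_mono (a d : ℕ) :
    ¬ IsMonogenic (X^3 - C ((2:ℤ)^(2*a)*3^(2*d+2)) * X - C ((3:ℤ)^(4*d+4))) := by
  intro h
  set g : ℤ[X] := X^3 - C ((2:ℤ)^(2*a)*3^(2*d+2)) * X - C ((3:ℤ)^(4*d+4)) with hgdef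
  have hgm : g.Monic := g_monic _ _
  set gq : ℚ[X] := g.map (algebraMap ℤ ℚ) with hgqdef
  set η : AdjoinRoot gq := AdjoinRoot.root gq with hηdef
  set φ := algebraMap ℚ (AdjoinRoot gq) with hφdef
  have hroot : η^3 = 2^(2*a) * 3^(2*d+2) * η + 3^(4*d+4) := by
    have h0 : aeval η gq = 0 := by rw [hηdef, AdjoinRoot.aeval_eq, AdjoinRoot.mk_self]
    simp only [hgqdef, hgdef, Polynomial.map_sub, Polynomial.map_mul, Polynomial.map_pow,
      map_X, map_C, map_sub, map_mul, map_pow, aeval_X, aeval_C,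
      algebraMap_int_eq, eq_intCast, Int.cast_pow, Int.cast_mul, Int.cast_ofNat,
      Polynomial.map_ofNat, map_ofNat] at h0
    linear_combination h0
  set c : ℚ := (3:ℚ)^(d+1) with hcdef
  have hc : c ≠ 0 := by positivity
  set t : AdjoinRoot gq := φ c⁻¹ * η with htdef
  have e1 : (c⁻¹)^3 * ((2:ℚ)^(2*a) * 3^(2*d+2)) = 2^(2*a) * c⁻¹ := by
    rw [hcdef]; field_simp; ring
  have e2 : (c⁻¹)^3 * (3:ℚ)^(4*d+4) = 3^(d+1) := by
    rw [hcdef]; field_simp; ring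
  have he1 := congrArg φ e1
  have he2 := congrArg φ e2
  simp only [map_mul, map_pow, map_ofNat] at he1 he2
  have hti : IsIntegral ℤ t := by
    refine ⟨X^3 - C ((2:ℤ)^(2*a)) * X - C ((3:ℤ)^(d+1)), g_monic _ _, ?_⟩
    rw [← aeval_def]
    simp only [map_sub, map_mul, map_pow, aeval_X, aeval_C, algebraMap_int_eq, eq_intCast,
      Int.cast_pow, Int.cast_ofNat, Polynomial.map_ofNat, map_ofNat]
    rw [htdef]
    linear_combination (φ c⁻¹)^3 * hroot + η * he1 + he2
  have hmem : t ∈ integralClosure ℤ (AdjoinRoot gq) := hti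
  rw [← h.2.2] at hmem
  rw [Algebra.adjoin_singleton_eq_range_aeval] at hmem
  obtain ⟨q, hq0⟩ := hmem
  have hq : aeval η q = t := hq0
  have hq' : AdjoinRoot.mk gq (q.map (algebraMap ℤ ℚ)) = t := by
    rw [← AdjoinRoot.aeval_eq, aeval_map_algebraMap]; exact hq
  have ht' : t = AdjoinRoot.mk gq (C c⁻¹ * X) := by
    rw [map_mul, AdjoinRoot.mk_C, AdjoinRoot.mk_X, htdef, hφdef, AdjoinRoot.algebraMap_eq, hηdef]
  have hdvd : gq ∣ (q.map (algebraMap ℤ ℚ) - C c⁻¹ * X) := by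
    rw [← AdjoinRoot.mk_eq_zero, map_sub, hq', ht', sub_self]
  have hdvd2 : gq ∣ ((C ((3:ℤ)^(d+1)) * q - X).map (algebraMap ℤ ℚ)) := by
    have h1 : gq ∣ C c * (q.map (algebraMap ℤ ℚ) - C c⁻¹ * X) := Dvd.dvd.mul_left hdvd (C c)
    have h2 : (C ((3:ℤ)^(d+1)) * q - X).map (algebraMap ℤ ℚ)
        = C c * (q.map (algebraMap ℤ ℚ) - C c⁻¹ * X) := by
      rw [Polynomial.map_sub, Polynomial.map_mul, map_C, map_X, mul_sub]
      congr 1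
      · congr 1
        rw [algebraMap_int_eq, eq_intCast, hcdef]
        push_cast
        ring
      · rw [← mul_assoc, ← C_mul, mul_inv_cancel₀ hc, C_1, one_mul]
    rw [h2]; exact h1
  have hdvdZ : g ∣ (C ((3:ℤ)^(d+1)) * q - X) :=
    (map_dvd_map _ (algebraMap ℤ ℚ).injective_int hgm).mp hdvd2
  have h3 : (g.map (Int.castRingHom (ZMod 3)))
      ∣ ((C ((3:ℤ)^(d+1)) * q - X).map (Int.castRingHom (ZMod 3))) :=
    Polynomial.map_dvd _ hdvdZ
  have c1 : (Int.castRingHom (ZMod 3)) ((2:ℤ)^(2*a)*3^(2*d+2)) = 0 := by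
    rw [eq_intCast]
    push_cast
    rw [show (3:ZMod 3) = 0 from rfl, zero_pow (by omega : 2*d+2 ≠ 0), mul_zero]
  have c2 : (Int.castRingHom (ZMod 3)) ((3:ℤ)^(4*d+4)) = 0 := by
    rw [eq_intCast]
    push_cast
    rw [show (3:ZMod 3) = 0 from rfl, zero_pow (by omega : 4*d+4 ≠ 0)]
  have c3 : (Int.castRingHom (ZMod 3)) ((3:ℤ)^(d+1)) = 0 := by
    rw [eq_intCast]
    push_cast
    rw [show (3:ZMod 3) = 0 from rfl, zero_pow (by omega : d+1 ≠ 0)]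
  have hg3 : g.map (Int.castRingHom (ZMod 3)) = X^3 := by
    rw [hgdef, Polynomial.map_sub, Polynomial.map_sub, Polynomial.map_mul, Polynomial.map_pow,
      map_X, map_C, map_C, c1, c2, C_0, zero_mul, sub_zero, sub_zero]
  have hr3 : (C ((3:ℤ)^(d+1)) * q - X).map (Int.castRingHom (ZMod 3)) = -X := by
    rw [Polynomial.map_sub, Polynomial.map_mul, map_C, map_X, c3, C_0, zero_mul, zero_sub]
  rw [hg3, hr3] at h3
  have h3' : (X : (ZMod 3)[X])^3 ∣ X := (dvd_neg).mp h3
  have hle := Polynomial.natDegree_le_of_dvd h3' X_ne_zero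
  simp only [natDegree_X_pow, natDegree_X] at hle
  omega

lemma g_natDegree (A B : ℤ) : (X^3 - C A * X - C B).natDegree = 3 := by
  compute_degree!

lemma irreducible_g (a d : ℕ) (ha : 1 ≤ a) (had : ¬(a=1 ∧ d=0)) :
    Irreducible ((X^3 - C ((2:ℤ)^(2*a)*3^(2*d+2)) * X - C ((3:ℤ)^(4*d+4))).map
      (algebraMap ℤ ℚ)) := by
  set g : ℤ[X] := X^3 - C ((2:ℤ)^(2*a)*3^(2*d+2)) * X - C ((3:ℤ)^(4*d+4)) with hgdef
  have hgm : g.Monic := g_monic _ _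
  have hgqm : (g.map (algebraMap ℤ ℚ)).Monic := hgm.map _
  have hdeg : (g.map (algebraMap ℤ ℚ)).natDegree = 3 := by
    rw [hgm.natDegree_map]; exact g_natDegree _ _
  rw [hgqm.irreducible_iff_roots_eq_zero_of_degree_le_three (by omega) (by omega)]
  rw [Multiset.eq_zero_iff_forall_notMem]
  intro x hx
  rw [mem_roots hgqm.ne_zero] at hx
  have hint : IsIntegral ℤ x := ⟨g, hgm, by rw [eval₂_eq_eval_map]; exact hx⟩
  obtain ⟨n, rfl⟩ := IsIntegrallyClosed.isIntegral_iff.mp hint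
  have hev := hx
  simp only [IsRoot, hgdef, Polynomial.map_sub, Polynomial.map_mul, Polynomial.map_pow,
    map_X, map_C, eval_sub, eval_mul, eval_pow, eval_X, eval_C,
    algebraMap_int_eq, eq_intCast, Polynomial.map_intCast, Polynomial.eval_intCast] at hev
  have hZ : n^3 - 2^(2*a)*3^(2*d+2)*n - 3^(4*d+4) = (0:ℤ) := by exact_mod_cast hev
  exact no_int_root_s10 a d ha had n hZ

theorem stmt_10 (a b : ℕ) (ha : 1 ≤ a) (hb : 2 ≤ b) (hab : (a, b) ≠ (1, 2)) :
    Irreducible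
      ((X ^ 3 - C ((2 : ℤ) ^ (2 * a) * 3 ^ (2 * b - 2)) * X - C ((3 : ℤ) ^ (4 * b - 4))).map
        (algebraMap ℤ ℚ)) ∧
    ¬ IsMonogenic
      (X ^ 3 - C ((2 : ℤ) ^ (2 * a) * 3 ^ (2 * b - 2)) * X - C ((3 : ℤ) ^ (4 * b - 4))) ∧
    ∀ θ : ℂ,
      aeval θ (X ^ 3 - C ((2 : ℤ) ^ (2 * a)) * X - C ((3 : ℤ) ^ (b - 1))) = 0 →
        aeval ((3 : ℂ) ^ (b - 1) * θ)
            (X ^ 3 - C ((2 : ℤ) ^ (2 * a) * 3 ^ (2 * b - 2)) * X -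
              C ((3 : ℤ) ^ (4 * b - 4))) = 0 ∧
          IntermediateField.adjoin ℚ {θ} =
            IntermediateField.adjoin ℚ {(3 : ℂ) ^ (b - 1) * θ} := by
  obtain ⟨d, rfl⟩ : ∃ d, b = d + 2 := ⟨b - 2, by omega⟩
  have had : ¬ (a = 1 ∧ d = 0) := by rintro ⟨rfl, rfl⟩; exact hab rfl
  simp only [show 2*(d+2)-2 = 2*d+2 from by omega, show 4*(d+2)-4 = 4*d+4 from by omega,
    show (d+2)-1 = d+1 from by omega]
  refine ⟨irreducible_g a d ha had, not_mono a d, ?_⟩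
  intro θ hθ
  constructor
  · simp only [map_sub, map_mul, map_pow, aeval_X, aeval_C, algebraMap_int_eq, eq_intCast,
      Int.cast_pow, Int.cast_mul, Int.cast_ofNat, Polynomial.map_ofNat, map_ofNat] at hθ ⊢
    linear_combination (3:ℂ)^(3*d+3) * hθ
  · have h3q : (3:ℂ)^(d+1) = algebraMap ℚ ℂ ((3:ℚ)^(d+1)) := by push_cast; norm_num
    apply le_antisymm
    · rw [IntermediateField.adjoin_le_iff, Set.singleton_subset_iff]
      have hmem := IntermediateField.mem_adjoin_simple_self ℚ ((3:ℂ)^(d+1) * θ)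
      have hθeq : θ = algebraMap ℚ ℂ (((3:ℚ)^(d+1))⁻¹) * ((3:ℂ)^(d+1) * θ) := by
        rw [map_inv₀, ← h3q, ← mul_assoc,
          inv_mul_cancel₀ (pow_ne_zero _ (by norm_num : (3:ℂ) ≠ 0)), one_mul]
      have hm2 : algebraMap ℚ ℂ (((3:ℚ)^(d+1))⁻¹) * ((3:ℂ)^(d+1) * θ)
          ∈ IntermediateField.adjoin ℚ {(3:ℂ)^(d+1) * θ} :=
        mul_mem (IntermediateField.algebraMap_mem _ _) hmem
      rwa [← hθeq] at hm2
    · rw [IntermediateField.adjoin_le_iff, Set.singleton_subset_iff]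
      rw [h3q]
      exact mul_mem (IntermediateField.algebraMap_mem _ _)
        (IntermediateField.mem_adjoin_simple_self ℚ θ)
end

section
/- Let a and b be integers with a ≥ 1 and b ≥ 2. Then 2^{2a} − 3^{b−1} = 1 holds if and only if (a,b) = (1,2), and the equation 2^{2a} − 3^{2(b−1)} = 1 has no solutions. -/
private lemma key (a k : ℕ) (ha : 1 ≤ a) (hk : 2 ≤ k) :
    (2 : ℤ) ^ (2 * a) - 3 ^ k ≠ 1 := by
  intro h
  have h4 : (4 : ℤ) ^ a = 3 ^ k + 1 := by
    have : (2 : ℤ) ^ (2 * a) = 4 ^ a := by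
      rw [pow_mul]; norm_num
    linarith [this ▸ h]
  -- mod 9 : 3 ∣ a
  have h9 : ((4 : ZMod 9)) ^ a = 1 := by
    have := congrArg (Int.cast : ℤ → ZMod 9) h4
    push_cast at this
    rw [this]
    obtain ⟨m, rfl⟩ : ∃ m, k = 2 + m := ⟨k - 2, by omega⟩
    rw [pow_add, show ((3:ZMod 9))^2 = 0 from rfl, zero_mul, zero_add]
  have h3a : 3 ∣ a := by
    obtain ⟨q, r, hr, rfl⟩ : ∃ q r, r < 3 ∧ a = 3 * q + r :=
      ⟨a / 3, a % 3, Nat.mod_lt _ (by norm_num), (Nat.div_add_mod a 3).symm⟩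
    have : ((4 : ZMod 9)) ^ (3 * q + r) = ((4:ZMod 9)^3)^q * 4^r := by
      rw [pow_add, pow_mul]
    rw [this] at h9
    have h43 : ((4 : ZMod 9))^3 = 1 := by decide
    rw [h43, one_pow, one_mul] at h9
    interval_cases r
    · exact ⟨q, by ring⟩
    · exact absurd h9 (by decide)
    · exact absurd h9 (by decide)
  -- mod 7
  obtain ⟨m, rfl⟩ := h3a
  have h7 : ((3 : ZMod 7)) ^ k = 0 := by
    have := congrArg (Int.cast : ℤ → ZMod 7) h4
    push_cast at this
    rw [pow_mul] at this
    norm_num at this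
    rw [show ((64:ZMod 7)) = 1 from rfl, one_pow] at this
    linear_combination -this
  have hu : ((3 : ZMod 7)) ^ k * 5 ^ k = 1 := by
    rw [← mul_pow, show ((3 : ZMod 7)) * 5 = 1 from rfl, one_pow]
  rw [h7, zero_mul] at hu
  exact absurd hu (by decide)

theorem stmt_12 (a b : ℕ) (ha : 1 ≤ a) (hb : 2 ≤ b) :
    ((2 : ℤ) ^ (2 * a) - 3 ^ (b - 1) = 1 ↔ (a, b) = (1, 2)) ∧
      (2 : ℤ) ^ (2 * a) - 3 ^ (2 * (b - 1)) ≠ 1 := by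
  constructor
  · constructor
    · intro h
      have hb2 : b = 2 := by
        by_contra hb2
        exact key a (b - 1) ha (by omega) h
      subst hb2
      norm_num at h
      have h4 : (2 : ℤ) ^ (2 * a) = 2 ^ 2 := by linarith
      have h2a : 2 * a = 2 := by
        have hinj : Function.Injective fun n : ℕ => (2:ℤ) ^ n := fun m n hmn =>
          Nat.pow_right_injective (le_refl 2) (by
            have := congrArg Int.natAbs hmn; simpa [Int.natAbs_pow] using this)
        exact hinj h4
      simp only [Prod.mk.injEq]
      exact ⟨by omega, trivial⟩
    · rintro h
      simp only [Prod.mk.injEq] at h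
      obtain ⟨rfl, rfl⟩ := h
      norm_num
  · exact key a (2 * (b - 1)) ha (by omega)
end

section
/- Let N be an integer with N ≥ 6 and N ≡ 2 (mod 4), let b₁ and b₂ be positive integers, and suppose that the trinomials f_{N,b₁}(x) := x^N − N(N−1)^{b₁}x − (N−1) and f_{N,b₂}(x) := x^N − N(N−1)^{b₂}x − (N−1) are both monogenic. If a root of f_{N,b₁} and a root of f_{N,b₂} generate the same degree-N extension of ℚ, then b₁ = b₂. -/
open Polynomial

noncomputable section

/-- transfer monogenicity along an AlgEquiv -/
lemma transfer_adjoin {K : Type*} [Field K] [Algebra ℚ K] {p : ℚ[X]}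
    (e : AdjoinRoot p ≃ₐ[ℚ] K)
    (h : Algebra.adjoin ℤ {AdjoinRoot.root p} = integralClosure ℤ (AdjoinRoot p)) :
    Algebra.adjoin ℤ {e (AdjoinRoot.root p)} = integralClosure ℤ K := by
  have h2 := congrArg (Subalgebra.map ((e.restrictScalars ℤ : AdjoinRoot p ≃ₐ[ℤ] K) : AdjoinRoot p →ₐ[ℤ] K)) h
  rwa [AlgHom.map_adjoin, Set.image_singleton, integralClosure_map_algEquiv (e.restrictScalars ℤ)] at h2

/-- replacement for the removed `PowerBasis.ofGenMemAdjoin` -/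
noncomputable def PowerBasis.ofGenMemAdjoin {F S : Type*} [Field F] [Field S] [Algebra F S]
    (B : PowerBasis F S) {x : S} (hint : IsIntegral F x) (hx : B.gen ∈ Algebra.adjoin F {x}) :
    PowerBasis F S :=
  PowerBasis.ofAdjoinEqTop hint (by
    rw [eq_top_iff, ← B.adjoin_gen_eq_top]
    exact Algebra.adjoin_le (Set.singleton_subset_iff.mpr hx))

section aux

variable {K : Type*} [Field K] [Algebra ℚ K] [FiniteDimensional ℚ K]

lemma aux_norm (N b : ℕ) (hN : 6 ≤ N) (heven : N % 2 = 0)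
    (pb : PowerBasis ℚ K)
    (hmin : minpoly ℚ pb.gen
      = (X ^ N - C ((N : ℤ) * ((N : ℤ) - 1) ^ b) * X - C ((N : ℤ) - 1)).map (algebraMap ℤ ℚ)) :
    Algebra.norm ℚ pb.gen = (-1 : ℚ) ^ N * (-((N : ℚ) - 1)) ∧
    Algebra.norm ℚ (pb.gen * aeval pb.gen (derivative (minpoly ℚ pb.gen)))
      = (-1 : ℚ) ^ N * ((N : ℚ) ^ N * (((N : ℚ) - 1) ^ N + ((N : ℚ) - 1) ^ ((b + 1) * N))) := by
  obtain ⟨M, rfl⟩ : ∃ M, N = M + 1 := ⟨N - 1, by omega⟩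
  have hM0 : M ≠ 0 := by omega
  set n : ℚ := ((M + 1 : ℕ) : ℚ) with hn
  have hn6 : (6 : ℚ) ≤ n := by rw [hn]; exact_mod_cast hN
  set B : ℚ := n - 1 with hB
  set A : ℚ := n * B ^ b with hA
  set c : ℚ := n * B ^ (b + 1) with hc
  set d : ℚ := n * B with hd
  have hB0 : B ≠ 0 := by rw [hB]; intro h; linarith [hn6]
  have hN0 : n ≠ 0 := by intro h; linarith [hn6]
  have hc0 : c ≠ 0 := by rw [hc]; exact mul_ne_zero hN0 (pow_ne_zero _ hB0)
  -- the minimal polynomial, concretely over ℚ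
  have e1 : algebraMap ℤ ℚ (((M + 1 : ℕ) : ℤ) * (((M + 1 : ℕ) : ℤ) - 1) ^ b) = A := by
    simp only [algebraMap_int_eq, eq_intCast, hA, hB, hn]; push_cast; ring
  have e2 : algebraMap ℤ ℚ ((((M + 1 : ℕ) : ℤ)) - 1) = B := by
    simp only [algebraMap_int_eq, eq_intCast, hB, hn]; push_cast; ring
  have hmin' : minpoly ℚ pb.gen = X ^ (M + 1) - C A * X - C B := by
    rw [hmin]
    simp only [Polynomial.map_sub, Polynomial.map_mul, Polynomial.map_pow, map_X, map_C]
    rw [e1, e2]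
  set θ : K := pb.gen with hθ
  have hev : aeval θ (X ^ (M + 1) - C A * X - C B) = 0 := by
    rw [← hmin']; exact minpoly.aeval ℚ pb.gen
  have hθN : θ ^ (M + 1) = algebraMap ℚ K A * θ + algebraMap ℚ K B := by
    simp only [map_sub, map_pow, map_mul, aeval_X, aeval_C] at hev
    linear_combination hev
  -- dimension and degree facts
  have hdeg : (X ^ (M + 1) - C A * X - C B : ℚ[X]).natDegree = M + 1 := by
    compute_degree! <;> simp [hM0]
  have hdim : pb.dim = M + 1 := by rw [← pb.natDegree_minpoly, hmin', hdeg]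
  have hfr : Module.finrank ℚ K = M + 1 := by rw [pb.finrank, hdim]
  -- Part 1 : the norm of the generator
  have hcoeff0 : (X ^ (M + 1) - C A * X - C B : ℚ[X]).coeff 0 = -B := by
    simp [coeff_X_pow]
  have part1 : Algebra.norm ℚ pb.gen = (-1 : ℚ) ^ (M + 1) * (-(n - 1)) := by
    rw [Algebra.PowerBasis.norm_gen_eq_coeff_zero_minpoly, hmin', hcoeff0, hdim, hB]
  refine ⟨part1, ?_⟩
  -- Part 2 : the norm of gen * f'(gen)
  have hderiv : derivative (X ^ (M + 1) - C A * X - C B : ℚ[X])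
      = C ((M + 1 : ℕ) : ℚ) * X ^ M - C A := by
    simp [derivative_X_pow]
  have hcBA : algebraMap ℚ K c = algebraMap ℚ K B * algebraMap ℚ K A := by
    rw [← map_mul]
    congr 1
    rw [hc, hA]
    ring
  have hdnB : algebraMap ℚ K d = algebraMap ℚ K n * algebraMap ℚ K B := by
    rw [← map_mul, hd]
  have hBn : algebraMap ℚ K B = algebraMap ℚ K n - 1 := by
    rw [hB, map_sub, map_one]
  have hkeyid : θ * aeval θ (derivative (minpoly ℚ θ))
      = algebraMap ℚ K c * θ + algebraMap ℚ K d := by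
    rw [hmin', hderiv]
    simp only [map_sub, map_mul, map_pow, aeval_X, aeval_C]
    have hnn : algebraMap ℚ K ((M + 1 : ℕ) : ℚ) = algebraMap ℚ K n := by rw [← hn]
    rw [hcBA, hdnB, hnn]
    calc θ * (algebraMap ℚ K n * θ ^ M - algebraMap ℚ K A)
        = algebraMap ℚ K n * (θ ^ M * θ) - algebraMap ℚ K A * θ := by ring
      _ = algebraMap ℚ K n * (algebraMap ℚ K A * θ + algebraMap ℚ K B)
            - algebraMap ℚ K A * θ := by rw [← pow_succ, hθN]
      _ = algebraMap ℚ K B * algebraMap ℚ K A * θ + algebraMap ℚ K n * algebraMap ℚ K B := by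
            rw [hBn]; ring
  set y : K := algebraMap ℚ K c * θ + algebraMap ℚ K d with hy
  have hyint : IsIntegral ℚ y := IsIntegral.of_finite ℚ y
  have hmem : pb.gen ∈ Algebra.adjoin ℚ ({y} : Set K) := by
    rw [Algebra.adjoin_singleton_eq_range_aeval, AlgHom.mem_range]
    refine ⟨C c⁻¹ * X - C (c⁻¹ * d), ?_⟩
    simp only [map_sub, map_mul, aeval_X, aeval_C, hy]
    rw [← hθ, map_inv₀]
    have hcK : (algebraMap ℚ K) c ≠ 0 := by
      have h' := (algebraMap ℚ K).injective.ne hc0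
      rwa [map_zero] at h'
    rw [mul_add, ← mul_assoc, inv_mul_cancel₀ hcK, one_mul, add_sub_cancel_right]
  set pby : PowerBasis ℚ K := pb.ofGenMemAdjoin hyint hmem with hpby
  have hpbygen : pby.gen = y := by rw [hpby]; simp [PowerBasis.ofGenMemAdjoin]
  have hdimy : pby.dim = M + 1 := by rw [← pby.finrank, hfr]
  -- the minimal polynomial of y
  set q : ℚ[X] := (X - C d) ^ (M + 1) - C (A * c ^ M) * (X - C d) - C (B * c ^ (M + 1)) with hq
  have hqmonic : q.Monic := by
    rw [hq]; monicity! <;> exact fun hM => absurd hM hM0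
  have hqdeg : q.natDegree = M + 1 := by
    rw [hq]; compute_degree! <;> simp [hM0]
  have hqroot : aeval y q = 0 := by
    rw [hq]
    simp only [map_sub, map_mul, map_pow, aeval_X, aeval_C, hy]
    have h1 : algebraMap ℚ K c * θ + algebraMap ℚ K d - algebraMap ℚ K d
        = algebraMap ℚ K c * θ := by ring
    rw [h1]
    linear_combination (algebraMap ℚ K c) ^ (M + 1) * hθN
  have hminy : minpoly ℚ y = q := by
    have hdvd := minpoly.dvd ℚ y hqroot
    obtain ⟨r, hr⟩ := hdvd
    have hmy : (minpoly ℚ y).Monic := minpoly.monic hyint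
    have hdegy : (minpoly ℚ y).natDegree = M + 1 := by
      rw [← hpbygen, pby.natDegree_minpoly, hdimy]
    have hrmonic : r.Monic := hmy.of_mul_monic_left (hr ▸ hqmonic)
    have hrdeg : r.natDegree = 0 := by
      have h3 : q.natDegree = (minpoly ℚ y).natDegree + r.natDegree := by
        rw [hr, Polynomial.natDegree_mul hmy.ne_zero hrmonic.ne_zero]
      rw [hqdeg, hdegy] at h3
      omega
    have hr1 : r = 1 := hrmonic.natDegree_eq_zero.mp hrdeg
    rw [hr, hr1, mul_one]
  -- coefficient 0 of q
  have hEven : Even (M + 1) := Nat.even_iff.mpr heven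
  have hqc0 : q.coeff 0 = n ^ (M + 1) * (B ^ (M + 1) + B ^ ((b + 1) * (M + 1))) := by
    rw [hq, Polynomial.coeff_zero_eq_eval_zero]
    simp only [eval_sub, eval_pow, eval_mul, eval_X, eval_C, zero_sub]
    rw [hEven.neg_pow]
    -- now a pure computation in ℚ
    rw [hd, hA, hc]
    have hp1 : (n * B ^ (b + 1)) ^ M = n ^ M * B ^ ((b + 1) * M) := by
      rw [mul_pow, ← pow_mul]
    have hp2 : (n * B ^ (b + 1)) ^ (M + 1) = n ^ (M + 1) * B ^ ((b + 1) * (M + 1)) := by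
      rw [mul_pow, ← pow_mul]
    rw [hp1, hp2]
    have he1 : B ^ b * B ^ ((b + 1) * M) * B = B ^ ((b + 1) * (M + 1)) := by
      rw [← pow_add, ← pow_succ]
      congr 1
      ring
    have he2 : B * B ^ ((b + 1) * (M + 1)) = B ^ ((b + 1) * (M + 1) + 1) := by
      rw [← pow_succ']
    calc (n * B) ^ (M + 1) - n * B ^ b * (n ^ M * B ^ ((b + 1) * M)) * -(n * B)
          - B * (n ^ (M + 1) * B ^ ((b + 1) * (M + 1)))
        = n ^ (M + 1) * B ^ (M + 1)
            + (n ^ (M + 1) * n) * (B ^ b * B ^ ((b + 1) * M) * B)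
            - n ^ (M + 1) * (B * B ^ ((b + 1) * (M + 1))) := by
          rw [mul_pow]; ring
      _ = n ^ (M + 1) * B ^ (M + 1)
            + (n ^ (M + 1) * n) * B ^ ((b + 1) * (M + 1))
            - n ^ (M + 1) * B ^ ((b + 1) * (M + 1) + 1) := by rw [he1, he2]
      _ = n ^ (M + 1) * (B ^ (M + 1) + B ^ ((b + 1) * (M + 1))) := by
          rw [pow_succ B ((b + 1) * (M + 1)), hB]; ring
  -- put everything together
  have : Algebra.norm ℚ y = (-1 : ℚ) ^ (M + 1)
      * (n ^ (M + 1) * (B ^ (M + 1) + B ^ ((b + 1) * (M + 1)))) := by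
    rw [← hpbygen, Algebra.PowerBasis.norm_gen_eq_coeff_zero_minpoly, hpbygen, hminy, hqc0, hdimy]
  rw [hkeyid, this, hB, hn]

end aux

set_option maxHeartbeats 1000000 in
theorem stmt_14 (N b₁ b₂ : ℕ) (hN : 6 ≤ N) (hmod : N % 4 = 2)
    (hb₁ : 1 ≤ b₁) (hb₂ : 1 ≤ b₂)
    (h₁ : IsMonogenic (X ^ N - C ((N : ℤ) * ((N : ℤ) - 1) ^ b₁) * X - C ((N : ℤ) - 1)))
    (h₂ : IsMonogenic (X ^ N - C ((N : ℤ) * ((N : ℤ) - 1) ^ b₂) * X - C ((N : ℤ) - 1)))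
    (θ₁ θ₂ : ℂ)
    (hθ₁ : aeval θ₁ (X ^ N - C ((N : ℤ) * ((N : ℤ) - 1) ^ b₁) * X - C ((N : ℤ) - 1)) = 0)
    (hθ₂ : aeval θ₂ (X ^ N - C ((N : ℤ) * ((N : ℤ) - 1) ^ b₂) * X - C ((N : ℤ) - 1)) = 0)
    (heq : IntermediateField.adjoin ℚ {θ₁} = IntermediateField.adjoin ℚ {θ₂}) :
    b₁ = b₂ := by
  set f₁ : ℤ[X] := X ^ N - C ((N : ℤ) * ((N : ℤ) - 1) ^ b₁) * X - C ((N : ℤ) - 1) with hf₁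
  set f₂ : ℤ[X] := X ^ N - C ((N : ℤ) * ((N : ℤ) - 1) ^ b₂) * X - C ((N : ℤ) - 1) with hf₂
  set g₁ : ℚ[X] := f₁.map (algebraMap ℤ ℚ) with hg₁
  set g₂ : ℚ[X] := f₂.map (algebraMap ℤ ℚ) with hg₂
  -- roots of g over ℂ
  have hg₁θ : aeval θ₁ g₁ = 0 := by rw [hg₁, aeval_map_algebraMap]; exact hθ₁
  have hg₂θ : aeval θ₂ g₂ = 0 := by rw [hg₂, aeval_map_algebraMap]; exact hθ₂
  -- integrality over ℚ
  have hint₁ : IsIntegral ℚ θ₁ := ⟨g₁, h₁.1.map _, by rwa [← aeval_def]⟩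
  have hint₂ : IsIntegral ℚ θ₂ := ⟨g₂, h₂.1.map _, by rwa [← aeval_def]⟩
  -- minimal polynomials over ℚ in ℂ
  have hmp₁ : minpoly ℚ θ₁ = g₁ := (minpoly.eq_of_irreducible_of_monic h₁.2.1 hg₁θ (h₁.1.map _)).symm
  have hmp₂ : minpoly ℚ θ₂ = g₂ := (minpoly.eq_of_irreducible_of_monic h₂.2.1 hg₂θ (h₂.1.map _)).symm
  -- the common field
  set K : IntermediateField ℚ ℂ := IntermediateField.adjoin ℚ {θ₁} with hK
  haveI : FiniteDimensional ℚ K := IntermediateField.adjoin.finiteDimensional hint₁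
  haveI : NumberField K := ⟨⟩
  -- elements of K
  have hθ₂K : θ₂ ∈ K := by
    rw [heq]; exact IntermediateField.mem_adjoin_simple_self ℚ θ₂
  set t₁ : K := IntermediateField.AdjoinSimple.gen ℚ θ₁ with ht₁
  set t₂ : K := ⟨θ₂, hθ₂K⟩ with ht₂
  have hvt₁ : algebraMap K ℂ t₁ = θ₁ := rfl
  have hvt₂ : algebraMap K ℂ t₂ = θ₂ := rfl
  have hmint₁ : minpoly ℚ t₁ = g₁ := by
    rw [← hmp₁, ← hvt₁, minpoly.algebraMap_eq (algebraMap K ℂ).injective]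
  have hmint₂ : minpoly ℚ t₂ = g₂ := by
    rw [← hmp₂, ← hvt₂, minpoly.algebraMap_eq (algebraMap K ℂ).injective]
  have hintt₁ : IsIntegral ℚ t₁ := (isIntegral_algebraMap_iff (algebraMap K ℂ).injective).mp hint₁
  have hintt₂ : IsIntegral ℚ t₂ := (isIntegral_algebraMap_iff (algebraMap K ℂ).injective).mp hint₂
  -- power bases
  set pb₁ : PowerBasis ℚ K := IntermediateField.adjoin.powerBasis hint₁ with hpb₁
  have hpb₁gen : pb₁.gen = t₁ := rfl
  have hmem12 : pb₁.gen ∈ Algebra.adjoin ℚ {t₂} := by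
    have h1 : θ₁ ∈ Algebra.adjoin ℚ ({θ₂} : Set ℂ) := by
      rw [← IntermediateField.adjoin_simple_toSubalgebra_of_isAlgebraic hint₂.isAlgebraic]
      have := IntermediateField.mem_adjoin_simple_self ℚ θ₁
      rwa [← hK, heq] at this
    rw [Algebra.adjoin_singleton_eq_range_aeval] at h1 ⊢
    obtain ⟨p, hp⟩ := h1
    refine ⟨p, ?_⟩
    apply (algebraMap K ℂ).injective
    rw [hpb₁gen, hvt₁, ← hp]
    exact (aeval_algebraMap_apply ℂ t₂ p).symm
  set pb₂ : PowerBasis ℚ K := pb₁.ofGenMemAdjoin hintt₂ hmem12 with hpb₂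
  have hpb₂gen : pb₂.gen = t₂ := by
    rw [hpb₂]; simp [PowerBasis.ofGenMemAdjoin]
  -- degrees
  have hfdeg₁ : f₁.natDegree = N := by rw [hf₁]; compute_degree! <;> omega
  have hfdeg₂ : f₂.natDegree = N := by rw [hf₂]; compute_degree! <;> omega
  have hgdeg₁ : g₁.natDegree = N := by rw [hg₁, (h₁.1).natDegree_map]; exact hfdeg₁
  have hgdeg₂ : g₂.natDegree = N := by rw [hg₂, (h₂.1).natDegree_map]; exact hfdeg₂
  -- the AdjoinRoot equivalences
  have hroot₁ : aeval pb₁.gen g₁ = 0 := by rw [hpb₁gen, ← hmint₁]; exact minpoly.aeval ℚ t₁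
  have hroot₂ : aeval pb₂.gen g₂ = 0 := by rw [hpb₂gen, ← hmint₂]; exact minpoly.aeval ℚ t₂
  have hminroot₁ : aeval (AdjoinRoot.root g₁) (minpoly ℚ pb₁.gen) = 0 := by
    rw [hpb₁gen, hmint₁, AdjoinRoot.aeval_eq, AdjoinRoot.mk_self]
  have hminroot₂ : aeval (AdjoinRoot.root g₂) (minpoly ℚ pb₂.gen) = 0 := by
    rw [hpb₂gen, hmint₂, AdjoinRoot.aeval_eq, AdjoinRoot.mk_self]
  set e₁ : AdjoinRoot g₁ ≃ₐ[ℚ] K := AdjoinRoot.equiv' g₁ pb₁ hminroot₁ hroot₁ with he₁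
  set e₂ : AdjoinRoot g₂ ≃ₐ[ℚ] K := AdjoinRoot.equiv' g₂ pb₂ hminroot₂ hroot₂ with he₂
  have he₁root : e₁ (AdjoinRoot.root g₁) = t₁ := by
    have h' : e₁ (AdjoinRoot.root g₁)
        = AdjoinRoot.liftAlgHom g₁ (Algebra.ofId ℚ K) pb₁.gen hroot₁ (AdjoinRoot.root g₁) := rfl
    exact h'.trans ((AdjoinRoot.liftAlgHom_root _ _ _ _).trans hpb₁gen)
  have he₂root : e₂ (AdjoinRoot.root g₂) = t₂ := by
    have h' : e₂ (AdjoinRoot.root g₂)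
        = AdjoinRoot.liftAlgHom g₂ (Algebra.ofId ℚ K) pb₂.gen hroot₂ (AdjoinRoot.root g₂) := rfl
    exact h'.trans ((AdjoinRoot.liftAlgHom_root _ _ _ _).trans hpb₂gen)
  -- transfer monogenicity
  have hmono₁ : Algebra.adjoin ℤ {t₁} = integralClosure ℤ K := by
    have := transfer_adjoin e₁ h₁.2.2
    rwa [he₁root] at this
  have hmono₂ : Algebra.adjoin ℤ {t₂} = integralClosure ℤ K := by
    have := transfer_adjoin e₂ h₂.2.2
    rwa [he₂root] at this
  -- integrality over ℤ
  have hZ₁ : IsIntegral ℤ t₁ := by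
    refine ⟨f₁, h₁.1, ?_⟩
    rw [← aeval_def]
    apply (algebraMap K ℂ).injective
    rw [map_zero, ← aeval_algebraMap_apply, hvt₁]
    exact hθ₁
  have hZ₂ : IsIntegral ℤ t₂ := by
    refine ⟨f₂, h₂.1, ?_⟩
    rw [← aeval_def]
    apply (algebraMap K ℂ).injective
    rw [map_zero, ← aeval_algebraMap_apply, hvt₂]
    exact hθ₂
  -- polynomials expressing each generator in the other
  obtain ⟨P₂, hP₂⟩ : ∃ P : ℤ[X], aeval t₁ P = t₂ := by
    have : t₂ ∈ Algebra.adjoin ℤ ({t₁} : Set K) := by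
      rw [hmono₁]; exact hZ₂
    rwa [Algebra.adjoin_singleton_eq_range_aeval, AlgHom.mem_range] at this
  obtain ⟨P₁, hP₁⟩ : ∃ P : ℤ[X], aeval t₂ P = t₁ := by
    have : t₁ ∈ Algebra.adjoin ℤ ({t₂} : Set K) := by
      rw [hmono₂]; exact hZ₁
    rwa [Algebra.adjoin_singleton_eq_range_aeval, AlgHom.mem_range] at this
  -- minpoly over ℤ vs ℚ
  have hminZQ₁ : minpoly ℚ pb₁.gen = (minpoly ℤ pb₁.gen).map (algebraMap ℤ ℚ) :=
    minpoly.isIntegrallyClosed_eq_field_fractions' ℚ (hpb₁gen ▸ hZ₁)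
  have hminZQ₂ : minpoly ℚ pb₂.gen = (minpoly ℤ pb₂.gen).map (algebraMap ℤ ℚ) :=
    minpoly.isIntegrallyClosed_eq_field_fractions' ℚ (hpb₂gen ▸ hZ₂)
  -- equality of discriminants of the two power bases
  have hdisc : Algebra.discr ℚ pb₁.basis = Algebra.discr ℚ pb₂.basis := by
    refine Algebra.discr_eq_discr_of_toMatrix_coeff_isIntegral K
      (fun i j => PowerBasis.toMatrix_isIntegral (B := pb₁) (B' := pb₂) (P := P₂) ?_ ?_ ?_ i j)
      (fun i j => PowerBasis.toMatrix_isIntegral (B := pb₂) (B' := pb₁) (P := P₁) ?_ ?_ ?_ i j)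
    · rw [hpb₁gen, hpb₂gen]; exact hP₂
    · rw [hpb₁gen]; exact hZ₁
    · exact hminZQ₁
    · rw [hpb₁gen, hpb₂gen]; exact hP₁
    · rw [hpb₂gen]; exact hZ₂
    · exact hminZQ₂
  -- rewrite via the norm formula
  rw [Algebra.discr_powerBasis_eq_norm, Algebra.discr_powerBasis_eq_norm] at hdisc
  have hcancel : Algebra.norm ℚ (aeval pb₁.gen (derivative (minpoly ℚ pb₁.gen)))
      = Algebra.norm ℚ (aeval pb₂.gen (derivative (minpoly ℚ pb₂.gen))) :=
    mul_left_cancel₀ (pow_ne_zero _ (neg_ne_zero.mpr one_ne_zero)) hdisc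
  -- apply the norm computations
  have heven : N % 2 = 0 := by omega
  have aux₁ := aux_norm N b₁ hN heven pb₁ (by rw [hpb₁gen, hmint₁])
  have aux₂ := aux_norm N b₂ hN heven pb₂ (by rw [hpb₂gen, hmint₂])
  have hkey : (-1 : ℚ) ^ N * ((N : ℚ) ^ N * (((N : ℚ) - 1) ^ N + ((N : ℚ) - 1) ^ ((b₁ + 1) * N)))
      = (-1 : ℚ) ^ N * ((N : ℚ) ^ N * (((N : ℚ) - 1) ^ N + ((N : ℚ) - 1) ^ ((b₂ + 1) * N))) := by
    rw [← aux₁.2, ← aux₂.2, map_mul, map_mul, aux₁.1, aux₂.1, hcancel]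
  have hN0 : ((N : ℚ)) ≠ 0 := by positivity
  have hkey2 : ((N : ℚ) - 1) ^ ((b₁ + 1) * N) = ((N : ℚ) - 1) ^ ((b₂ + 1) * N) := by
    have h1 := mul_left_cancel₀ (pow_ne_zero N (neg_ne_zero.mpr (one_ne_zero (α := ℚ)))) hkey
    have h2 := mul_left_cancel₀ (pow_ne_zero N hN0) h1
    exact add_left_cancel h2
  have hgt : (1 : ℚ) < (N : ℚ) - 1 := by
    have : (6 : ℚ) ≤ (N : ℚ) := by exact_mod_cast hN
    linarith
  have hexp := (pow_right_strictMono₀ hgt).injective hkey2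
  have hNne : N ≠ 0 := by omega
  have := Nat.eq_of_mul_eq_mul_right (Nat.pos_of_ne_zero hNne) hexp
  omega
end
end

section
/- Let N be an integer with N ≥ 3 and N ≡ 3 (mod 4), let b₁ and b₂ be positive integers, and suppose that the trinomials f_{N,b₁}(x) := x^N − x − (N−1)N^{b₁} and f_{N,b₂}(x) := x^N − x − (N−1)N^{b₂} are both monogenic. If a root of f_{N,b₁} and a root of f_{N,b₂} generate the same degree-N extension of ℚ, then b₁ = b₂. -/
open Polynomial

lemma trin_natDegree (N : ℕ) (hN : 3 ≤ N) (R : Type*) [CommRing R] [Nontrivial R] (m : R) :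
    (X ^ N - X - C m : R[X]).natDegree = N := by
  have h1 : (X + C m : R[X]).natDegree < (X ^ N : R[X]).natDegree := by
    rw [natDegree_X_pow]
    calc (X + C m : R[X]).natDegree ≤ 1 := by
          simpa using natDegree_add_le (X : R[X]) (C m)
      _ < N := by omega
  have heq : (X ^ N - X - C m : R[X]) = X ^ N - (X + C m) := by ring
  rw [heq, natDegree_sub_eq_left_of_natDegree_lt h1, natDegree_X_pow]


lemma mono_transport {A B : Type*} [CommRing A] [CommRing B] [Algebra ℚ A] [Algebra ℚ B]
    (e : A ≃ₐ[ℚ] B) (x : A) (h : Algebra.adjoin ℤ {x} = integralClosure ℤ A) :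
    Algebra.adjoin ℤ {e x} = integralClosure ℤ B := by
  let e' : A ≃ₐ[ℤ] B := e.restrictScalars ℤ
  have h1 : Algebra.adjoin ℤ {e x} = (Algebra.adjoin ℤ {x}).map e'.toAlgHom := by
    rw [AlgHom.map_adjoin, Set.image_singleton]; rfl
  rw [h1, h]
  exact integralClosure_map_algEquiv e'

lemma norm_deriv {K : Type*} [Field K] [Algebra ℚ K] [FiniteDimensional ℚ K]
    (pb : PowerBasis ℚ K) (N : ℕ) (hN : 3 ≤ N) (hodd : Odd N) (m : ℚ) (hm : m ≠ 0)
    (hmin : minpoly ℚ pb.gen = X ^ N - X - C m) :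
    Algebra.norm ℚ (aeval pb.gen (derivative (X ^ N - X - C m : ℚ[X]))) =
      (N : ℚ) ^ N * m ^ (N - 1) - ((N : ℚ) - 1) ^ (N - 1) := by
  obtain ⟨k, hk⟩ : ∃ k, N = k + 1 := ⟨N - 1, by omega⟩
  have hNQ : (3 : ℚ) ≤ (N : ℚ) := by exact_mod_cast hN
  set c : ℚ := (N : ℚ) - 1 with hc_def
  have hc : c ≠ 0 := by rw [hc_def]; intro h; nlinarith
  set e : ℚ := (N : ℚ) * m / c with he_def
  have hce : c * e = (N : ℚ) * m := by rw [he_def]; field_simp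
  set t := pb.gen with ht_def
  have hdim : pb.dim = N := by
    rw [← pb.natDegree_minpoly, hmin, trin_natDegree N hN]
  have hfin : Module.finrank ℚ K = N := by rw [pb.finrank, hdim]
  -- t^N = t + m
  have htN : t ^ N = t + algebraMap ℚ K m := by
    have h0 := minpoly.aeval ℚ t
    rw [hmin] at h0
    simp only [map_sub, map_pow, aeval_X, aeval_C] at h0
    linear_combination h0
  -- the element w
  have hderiv : derivative (X ^ N - X - C m : ℚ[X]) = C (N : ℚ) * X ^ (N - 1) - 1 := by
    simp [derivative_X_pow]
  set w := aeval t (derivative (X ^ N - X - C m : ℚ[X])) with hw_def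
  have hw : w = algebraMap ℚ K (N : ℚ) * t ^ (N - 1) - 1 := by
    rw [hw_def, hderiv]; simp
  -- t * w = c • (t + e)
  set v : K := t + algebraMap ℚ K e with hv_def
  have htw : t * w = algebraMap ℚ K c * v := by
    have hpow : t * t ^ (N - 1) = t ^ N := by
      have h1 : N - 1 = k := by omega
      rw [h1, hk, pow_succ]; ring
    rw [hw, hv_def]
    have : t * (algebraMap ℚ K (N:ℚ) * t ^ (N-1) - 1)
        = algebraMap ℚ K (N:ℚ) * (t * t^(N-1)) - t := by ring
    rw [this, hpow, htN]
    have h2 : algebraMap ℚ K c * (t + algebraMap ℚ K e)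
        = algebraMap ℚ K c * t + algebraMap ℚ K (c * e) := by rw [map_mul]; ring
    rw [h2, hce, hc_def, map_sub, map_one]
    push_cast
    ring
  -- norm of t
  have hnt : Algebra.norm ℚ t = m := by
    rw [Algebra.PowerBasis.norm_gen_eq_coeff_zero_minpoly pb, hdim]
    rw [show minpoly ℚ pb.gen = X ^ N - X - C m from hmin]
    have h0 : (X ^ N - X - C m : ℚ[X]).coeff 0 = -m := by
      have hne : N ≠ 0 := by omega
      simp [coeff_X_pow, Ne.symm hne]
    rw [h0, hodd.neg_one_pow]; ring
  -- power basis at v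
  have hv_int : IsIntegral ℚ v := IsIntegral.of_finite ℚ v
  have hmem : pb.gen ∈ Algebra.adjoin ℚ {v} := by
    have hgv : pb.gen = v - algebraMap ℚ K e := by rw [hv_def]; ring
    rw [hgv]
    exact Subalgebra.sub_mem _ (Algebra.self_mem_adjoin_singleton ℚ v)
      (Subalgebra.algebraMap_mem _ e)
  set pb' := PowerBasis.ofAdjoinEqTop hv_int (pb.adjoin_eq_top_of_gen_mem_adjoin hmem) with hpb'
  have hgen' : pb'.gen = v := by simp [hpb', PowerBasis.ofAdjoinEqTop_gen]
  have hdim' : pb'.dim = N := by rw [← hfin]; exact pb'.finrank.symm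
  have hminv : minpoly ℚ v = (X ^ N - X - C m : ℚ[X]).comp (X - C e) := by
    rw [hv_def, minpoly.add_algebraMap, hmin]
  have hnv : Algebra.norm ℚ v = e ^ N - e + m := by
    rw [← hgen', Algebra.PowerBasis.norm_gen_eq_coeff_zero_minpoly pb', hgen', hdim', hminv]
    have h1 : ((X ^ N - X - C m : ℚ[X]).comp (X - C e)).coeff 0 = (-e) ^ N - (-e) - m := by
      rw [coeff_zero_eq_eval_zero, eval_comp]; simp
    simp only [h1, hodd.neg_pow, hodd.neg_one_pow]
    ring
  -- multiplicativity
  have key : m * Algebra.norm ℚ w = c ^ N * (e ^ N - e + m) := by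
    calc m * Algebra.norm ℚ w = Algebra.norm ℚ t * Algebra.norm ℚ w := by rw [hnt]
      _ = Algebra.norm ℚ (t * w) := (map_mul _ _ _).symm
      _ = Algebra.norm ℚ (algebraMap ℚ K c * v) := by rw [htw]
      _ = Algebra.norm ℚ (algebraMap ℚ K c) * Algebra.norm ℚ v := map_mul _ _ _
      _ = c ^ N * (e ^ N - e + m) := by rw [Algebra.norm_algebraMap, hfin, hnv]
  have hrhs : c ^ N * (e ^ N - e + m) = m * ((N : ℚ) ^ N * m ^ (N - 1) - c ^ (N - 1)) := by
    have hsub : N - 1 = k := by omega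
    have hk0 : (k : ℚ) ≠ 0 := Nat.cast_ne_zero.mpr (by omega)
    rw [he_def, hc_def, hsub, hk]
    push_cast
    have h1 : (k : ℚ) + 1 - 1 = (k : ℚ) := by ring
    rw [h1]
    field_simp
    have h2 : ((k : ℚ) * m + m) ^ k = m ^ k * (1 + (k : ℚ)) ^ k := by
      rw [show ((k : ℚ) * m + m) = m * (1 + (k : ℚ)) from by ring, mul_pow]
    have h3 : (k:ℚ) ^ (k + 1) * (((k:ℚ) + 1) * m / k) ^ (k + 1) = ((k:ℚ) + 1) ^ (k + 1) * m ^ (k + 1) := by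
      rw [← mul_pow, mul_div_cancel₀ _ hk0, mul_pow]
    linear_combination (k:ℚ) * h3
  exact mul_left_cancel₀ hm (key.trans hrhs)

set_option maxHeartbeats 1000000 in
theorem stmt_18 (N b₁ b₂ : ℕ) (hN : 3 ≤ N) (hmod : N % 4 = 3)
    (hb₁ : 1 ≤ b₁) (hb₂ : 1 ≤ b₂)
    (h₁ : IsMonogenic (X ^ N - X - C (((N : ℤ) - 1) * (N : ℤ) ^ b₁)))
    (h₂ : IsMonogenic (X ^ N - X - C (((N : ℤ) - 1) * (N : ℤ) ^ b₂)))
    (θ₁ θ₂ : ℂ)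
    (hθ₁ : aeval θ₁ (X ^ N - X - C (((N : ℤ) - 1) * (N : ℤ) ^ b₁)) = 0)
    (hθ₂ : aeval θ₂ (X ^ N - X - C (((N : ℤ) - 1) * (N : ℤ) ^ b₂)) = 0)
    (heq : IntermediateField.adjoin ℚ {θ₁} = IntermediateField.adjoin ℚ {θ₂}) :
    b₁ = b₂ := by
  have hodd : Odd N := Nat.odd_iff.mpr (by omega)
  set m₁ : ℤ := ((N : ℤ) - 1) * (N : ℤ) ^ b₁ with hm₁_def
  set m₂ : ℤ := ((N : ℤ) - 1) * (N : ℤ) ^ b₂ with hm₂_def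
  set f₁ : ℤ[X] := X ^ N - X - C m₁ with hf₁_def
  set f₂ : ℤ[X] := X ^ N - X - C m₂ with hf₂_def
  -- mapped polynomials
  have hmap : ∀ m : ℤ, (X ^ N - X - C m : ℤ[X]).map (algebraMap ℤ ℚ)
      = X ^ N - X - C (m : ℚ) := by
    intro m
    simp [Polynomial.map_sub, Polynomial.map_pow]
  have hmonQ₁ : (f₁.map (algebraMap ℤ ℚ)).Monic := h₁.1.map _
  have hmonQ₂ : (f₂.map (algebraMap ℤ ℚ)).Monic := h₂.1.map _
  -- roots over ℚ
  have hrQ₁ : aeval θ₁ (f₁.map (algebraMap ℤ ℚ)) = 0 := by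
    rw [aeval_map_algebraMap]; exact hθ₁
  have hrQ₂ : aeval θ₂ (f₂.map (algebraMap ℤ ℚ)) = 0 := by
    rw [aeval_map_algebraMap]; exact hθ₂
  -- minimal polynomials over ℚ of the complex roots
  have hminθ₁ : minpoly ℚ θ₁ = f₁.map (algebraMap ℤ ℚ) :=
    (minpoly.eq_of_irreducible_of_monic h₁.2.1 hrQ₁ hmonQ₁).symm
  have hminθ₂ : minpoly ℚ θ₂ = f₂.map (algebraMap ℤ ℚ) :=
    (minpoly.eq_of_irreducible_of_monic h₂.2.1 hrQ₂ hmonQ₂).symm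
  have hint₁ : IsIntegral ℚ θ₁ := ⟨f₁.map (algebraMap ℤ ℚ), hmonQ₁, hrQ₁⟩
  have hint₂ : IsIntegral ℚ θ₂ := ⟨f₂.map (algebraMap ℤ ℚ), hmonQ₂, hrQ₂⟩
  -- the common field
  set K := IntermediateField.adjoin ℚ {θ₁} with hK_def
  haveI fd : FiniteDimensional ℚ K := IntermediateField.adjoin.finiteDimensional hint₁
  haveI : NumberField K := ⟨⟩
  set t₁ : K := IntermediateField.AdjoinSimple.gen ℚ θ₁ with ht₁_def
  have hθ₂K : θ₂ ∈ K := by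
    have h0 := IntermediateField.mem_adjoin_simple_self ℚ θ₂
    rw [← heq] at h0; exact h0
  set t₂ : K := ⟨θ₂, hθ₂K⟩ with ht₂_def
  have hvalt₁ : algebraMap K ℂ t₁ = θ₁ := rfl
  have hvalt₂ : algebraMap K ℂ t₂ = θ₂ := rfl
  have hinjK : Function.Injective (algebraMap K ℂ) := (algebraMap K ℂ).injective
  have hmint₁ : minpoly ℚ t₁ = f₁.map (algebraMap ℤ ℚ) := by
    rw [← hminθ₁, ← hvalt₁, minpoly.algebraMap_eq hinjK]
  have hmint₂ : minpoly ℚ t₂ = f₂.map (algebraMap ℤ ℚ) := by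
    rw [← hminθ₂, ← hvalt₂, minpoly.algebraMap_eq hinjK]
  -- integrality over ℤ
  have hintZ : ∀ (t : K) (m : ℤ), aeval (algebraMap K ℂ t) (X ^ N - X - C m : ℤ[X]) = 0 →
      aeval t (X ^ N - X - C m : ℤ[X]) = 0 := by
    intro t m h
    apply hinjK
    rw [map_zero, ← h, aeval_algebraMap_apply]
  have hrZ₁ : aeval t₁ f₁ = 0 := hintZ t₁ m₁ hθ₁
  have hrZ₂ : aeval t₂ f₂ = 0 := hintZ t₂ m₂ hθ₂
  have hintZ₁ : IsIntegral ℤ t₁ := ⟨f₁, h₁.1, hrZ₁⟩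
  have hintZ₂ : IsIntegral ℤ t₂ := ⟨f₂, h₂.1, hrZ₂⟩
  -- power bases
  set pb₁ : PowerBasis ℚ K := IntermediateField.adjoin.powerBasis hint₁ with hpb₁_def
  set pb₂ : PowerBasis ℚ K :=
    (IntermediateField.adjoin.powerBasis hint₂).map (IntermediateField.equivOfEq heq.symm)
    with hpb₂_def
  have hgen₁ : pb₁.gen = t₁ := by
    rw [hpb₁_def, IntermediateField.adjoin.powerBasis_gen]
  have hgen₂ : pb₂.gen = t₂ := by
    rw [hpb₂_def]
    rfl
  -- monogenicity transported to K
  have hmono₁ : Algebra.adjoin ℤ {t₁} = integralClosure ℤ K := by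
    have h0 := h₁.2.2
    rw [← hminθ₁] at h0
    have := mono_transport (IntermediateField.adjoinRootEquivAdjoin ℚ hint₁) _ h0
    rwa [IntermediateField.adjoinRootEquivAdjoin_apply_root] at this
  have hmono₂ : Algebra.adjoin ℤ {t₂} = integralClosure ℤ K := by
    have h0 := h₂.2.2
    rw [← hminθ₂] at h0
    have := mono_transport ((IntermediateField.adjoinRootEquivAdjoin ℚ hint₂).trans
      (IntermediateField.equivOfEq heq.symm)) _ h0
    rw [AlgEquiv.trans_apply, IntermediateField.adjoinRootEquivAdjoin_apply_root] at this
    exact this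
  -- positivity of the constants
  have hNZ : (3 : ℤ) ≤ (N : ℤ) := by exact_mod_cast hN
  have hm₁pos : 0 < m₁ := by
    rw [hm₁_def]
    exact mul_pos (by omega) (pow_pos (by omega) _)
  have hm₂pos : 0 < m₂ := by
    rw [hm₂_def]
    exact mul_pos (by omega) (pow_pos (by omega) _)
  -- mutual adjoin membership gives integral change of basis
  have ht₂mem : t₂ ∈ Algebra.adjoin ℤ {t₁} := by rw [hmono₁]; exact hintZ₂
  have ht₁mem : t₁ ∈ Algebra.adjoin ℤ {t₂} := by rw [hmono₂]; exact hintZ₁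
  obtain ⟨P, hP⟩ : ∃ p : ℤ[X], aeval t₁ p = t₂ := by
    rwa [Algebra.adjoin_singleton_eq_range_aeval, AlgHom.mem_range] at ht₂mem
  obtain ⟨Q, hQ⟩ : ∃ p : ℤ[X], aeval t₂ p = t₁ := by
    rwa [Algebra.adjoin_singleton_eq_range_aeval, AlgHom.mem_range] at ht₁mem
  have hmm₁ : minpoly ℚ pb₁.gen = map (algebraMap ℤ ℚ) (minpoly ℤ pb₁.gen) := by
    rw [hgen₁]; exact minpoly.isIntegrallyClosed_eq_field_fractions' ℚ hintZ₁
  have hmm₂ : minpoly ℚ pb₂.gen = map (algebraMap ℤ ℚ) (minpoly ℤ pb₂.gen) := by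
    rw [hgen₂]; exact minpoly.isIntegrallyClosed_eq_field_fractions' ℚ hintZ₂
  have hint1 : ∀ i j, IsIntegral ℤ (pb₁.basis.toMatrix (⇑pb₂.basis) i j) := by
    refine PowerBasis.toMatrix_isIntegral (P := P) ?_ ?_ hmm₁
    · rw [hgen₁, hgen₂]; exact hP
    · rw [hgen₁]; exact hintZ₁
  have hint2 : ∀ i j, IsIntegral ℤ (pb₂.basis.toMatrix (⇑pb₁.basis) i j) := by
    refine PowerBasis.toMatrix_isIntegral (P := Q) ?_ ?_ hmm₂
    · rw [hgen₂, hgen₁]; exact hQ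
    · rw [hgen₂]; exact hintZ₂
  have hdiscr : Algebra.discr ℚ pb₁.basis = Algebra.discr ℚ pb₂.basis :=
    Algebra.discr_eq_discr_of_toMatrix_coeff_isIntegral _ hint1 hint2
  -- discriminant to norm of derivative
  have hd₁ := Algebra.discr_powerBasis_eq_norm ℚ pb₁
  have hd₂ := Algebra.discr_powerBasis_eq_norm ℚ pb₂
  rw [hd₁, hd₂] at hdiscr
  have hnorm_eq : Algebra.norm ℚ (aeval pb₁.gen (derivative (minpoly ℚ pb₁.gen)))
      = Algebra.norm ℚ (aeval pb₂.gen (derivative (minpoly ℚ pb₂.gen))) :=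
    mul_left_cancel₀ (pow_ne_zero _ (by norm_num)) hdiscr
  -- explicit norms
  have hminq₁ : minpoly ℚ pb₁.gen = X ^ N - X - C ((m₁ : ℚ)) := by
    rw [hgen₁, hmint₁, hf₁_def, hmap]
  have hminq₂ : minpoly ℚ pb₂.gen = X ^ N - X - C ((m₂ : ℚ)) := by
    rw [hgen₂, hmint₂, hf₂_def, hmap]
  have hn₁ := norm_deriv pb₁ N hN hodd (m₁ : ℚ)
    (by exact_mod_cast hm₁pos.ne') hminq₁
  have hn₂ := norm_deriv pb₂ N hN hodd (m₂ : ℚ)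
    (by exact_mod_cast hm₂pos.ne') hminq₂
  rw [hminq₁, hminq₂] at hnorm_eq
  rw [hn₁, hn₂] at hnorm_eq
  -- extract m₁ = m₂
  have hNQne : ((N : ℚ)) ^ N ≠ 0 := pow_ne_zero _ (by positivity)
  have hpow_eq : (m₁ : ℚ) ^ (N - 1) = (m₂ : ℚ) ^ (N - 1) := by
    apply mul_left_cancel₀ hNQne
    linarith [hnorm_eq]
  have hm_eq : m₁ = m₂ := by
    have h0 : m₁ ^ (N - 1) = m₂ ^ (N - 1) := by exact_mod_cast hpow_eq
    have hne : N - 1 ≠ 0 := by omega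
    rcases lt_trichotomy m₁ m₂ with h | h | h
    · exact absurd h0 (ne_of_lt (pow_lt_pow_left₀ h hm₁pos.le hne))
    · exact h
    · exact absurd h0.symm (ne_of_lt (pow_lt_pow_left₀ h hm₂pos.le hne))
  -- conclude
  rw [hm₁_def, hm₂_def] at hm_eq
  have hN1 : ((N : ℤ) - 1) ≠ 0 := by
    have : (3 : ℤ) ≤ (N : ℤ) := by exact_mod_cast hN
    omega
  have hpow : (N : ℤ) ^ b₁ = (N : ℤ) ^ b₂ := mul_left_cancel₀ hN1 hm_eq
  have hpowN : N ^ b₁ = N ^ b₂ := by exact_mod_cast hpow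
  exact Nat.pow_right_injective (by omega) hpowN
end

section
/- Let b and N be integers with b ≥ 1, N ≥ 3, and N ≡ 3 (mod 4), and suppose that δ := 1 − N^{(b+1)N−b} is squarefree. Then the ideal class group of the imaginary quadratic field ℚ(√δ) contains an element of order (b+1)N − b. -/
open NumberField Polynomial
open scoped nonZeroDivisors

/-- In a commutative ring, `(I ⊔ J) ^ n ≤ J ⊔ I ^ n`. -/
theorem aux_sup_pow_19 {R : Type*} [CommRing R] (I J : Ideal R) (n : ℕ) :
    (I ⊔ J) ^ n ≤ J ⊔ I ^ n := by
  induction n with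
  | zero => simp
  | succ n ih =>
    rw [pow_succ]
    refine le_trans (Ideal.mul_mono_left ih) ?_
    rw [Ideal.sup_mul, Ideal.mul_sup, Ideal.mul_sup, ← pow_succ]
    have h1 : J * I ≤ J := Ideal.mul_le_left
    have h2 : J * J ≤ J := Ideal.mul_le_right
    have h3 : I ^ n * J ≤ J := Ideal.mul_le_right
    exact sup_le (sup_le (h1.trans le_sup_left) (h2.trans le_sup_left))
      (sup_le le_sup_right (h3.trans le_sup_left))

/-- If `δ` is squarefree and `δ * q ^ 2` is an integer then `q` is an integer. -/
theorem aux_sf_19 (δ : ℤ) (hsf : Squarefree δ) (q : ℚ) (n : ℤ) (h : (δ : ℚ) * q ^ 2 = (n : ℚ)) :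
    ∃ a : ℤ, q = (a : ℚ) := by
  have hq : (δ : ℚ) * ((q.num : ℚ) ^ 2 / (q.den : ℚ) ^ 2) = (n : ℚ) := by
    rw [← div_pow, Rat.num_div_den q] at *
    exact h
  have hden : (q.den : ℚ) ≠ 0 := by exact_mod_cast q.den_nz
  have key : (δ : ℚ) * (q.num : ℚ) ^ 2 = (n : ℚ) * (q.den : ℚ) ^ 2 := by
    field_simp at hq
    linarith [hq]
  have keyz : δ * q.num ^ 2 = n * (q.den : ℤ) ^ 2 := by exact_mod_cast key
  have hdvd : ((q.den : ℤ)) ^ 2 ∣ q.num ^ 2 * δ := ⟨n, by linear_combination keyz⟩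
  have hcop : IsCoprime (q.num) ((q.den : ℤ)) := by
    rw [Int.isCoprime_iff_gcd_eq_one]
    exact q.reduced
  have hcop2 : IsCoprime ((q.den : ℤ) ^ 2) (q.num ^ 2) := (hcop.symm.pow)
  have hdvdδ : ((q.den : ℤ)) ^ 2 ∣ δ := hcop2.dvd_of_dvd_mul_left hdvd
  have : IsUnit ((q.den : ℤ)) := hsf _ (by simpa [pow_two] using hdvdδ)
  have hd1 : q.den = 1 := by
    have := Int.isUnit_iff.mp this
    omega
  exact ⟨q.num, by rw [← Rat.num_div_den q, hd1]; simp⟩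


set_option maxHeartbeats 3200000 in
theorem stmt_19 (b N : ℕ) (hb : 1 ≤ b) (hN : 3 ≤ N) (hmod : N % 4 = 3)
    (hsf : Squarefree (1 - (N : ℤ) ^ ((b + 1) * N - b)))
    (K : Type) [Field K] [NumberField K] (θ : K)
    (hθ : θ ^ 2 = ((1 - (N : ℤ) ^ ((b + 1) * N - b) : ℤ) : K))
    (hgen : Algebra.adjoin ℚ {θ} = ⊤) :
    ∃ g : ClassGroup (NumberField.RingOfIntegers K),
      orderOf g = (b + 1) * N - b := by
  -- arithmetic preliminaries on `m`
  set m : ℕ := (b + 1) * N - b with hm_def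
  have hm5 : 5 ≤ m ∧ m % 2 = 1 := by
    obtain ⟨k, rfl⟩ : ∃ k, N = k + 3 := ⟨N - 3, by omega⟩
    have hexp : (b + 1) * (k + 3) = b * k + 3 * b + k + 3 := by ring
    have hc2 : b * k % 2 = 0 := by
      have hk2 : k % 2 = 0 := by omega
      rw [Nat.mul_mod, hk2, mul_zero]
      rfl
    rw [hm_def]
    generalize b * k = c at hexp hc2
    omega
  obtain ⟨hm5, hmodd⟩ := hm5
  have hm1 : 1 ≤ m := by omega
  set δ : ℤ := 1 - (N : ℤ) ^ m with hδ_def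
  have hN3 : (3 : ℤ) ≤ (N : ℤ) := by exact_mod_cast hN
  have hNm3 : (3 : ℤ) ≤ (N : ℤ) ^ m := le_trans hN3 (le_self_pow₀ (by omega) (by omega))
  have hδneg : δ < 0 := by omega
  have hθK : θ ^ 2 = (δ : K) := hθ
  -- minimal polynomial
  have haev : (Polynomial.aeval θ) (X ^ 2 - C (δ : ℚ)) = 0 := by
    rw [map_sub, map_pow, aeval_X, aeval_C, hθK]
    simp
  have hpm : (X ^ 2 - C (δ : ℚ)).Monic := Polynomial.monic_X_pow_sub_C _ (by norm_num)
  have hθQint : IsIntegral ℚ θ := ⟨X ^ 2 - C (δ : ℚ), hpm, haev⟩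
  have hd2 : (X ^ 2 - C (δ : ℚ)).natDegree = 2 := by
    rw [Polynomial.natDegree_X_pow_sub_C]
  have hmin : minpoly ℚ θ = X ^ 2 - C (δ : ℚ) := by
    have hdvd : minpoly ℚ θ ∣ X ^ 2 - C (δ : ℚ) := minpoly.dvd ℚ θ haev
    have hmono := minpoly.monic hθQint
    have hndle := Polynomial.natDegree_le_of_dvd hdvd hpm.ne_zero
    rw [hd2] at hndle
    have hnot1 : θ ∉ (algebraMap ℚ K).range := by
      rintro ⟨q, rfl⟩
      have : (algebraMap ℚ K) (q ^ 2) = (algebraMap ℚ K) ((δ : ℚ)) := by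
        rw [map_pow, hθK]; simp
      have hq2 : q ^ 2 = (δ : ℚ) := (algebraMap ℚ K).injective this
      have : (0 : ℚ) ≤ q ^ 2 := sq_nonneg q
      rw [hq2] at this
      exact absurd (by exact_mod_cast this) (not_le.mpr hδneg)
    have h2le : 2 ≤ (minpoly ℚ θ).natDegree := by
      rcases Nat.lt_or_ge (minpoly ℚ θ).natDegree 2 with h | h
      · interval_cases hnd : (minpoly ℚ θ).natDegree
        · exact absurd (minpoly.natDegree_pos hθQint) (by omega)
        · exact absurd ((minpoly.natDegree_eq_one_iff).mp hnd) hnot1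
      · exact h
    exact Polynomial.eq_of_dvd_of_natDegree_le_of_leadingCoeff hdvd (by omega)
      (by rw [hmono.leadingCoeff, hpm.leadingCoeff])
  -- power basis and rank
  let pb : PowerBasis ℚ K := (Algebra.adjoin.powerBasis hθQint).map
    ((Subalgebra.equivOfEq _ _ hgen).trans Subalgebra.topEquiv)
  have hpbgen : pb.gen = θ := rfl
  have hpbdim : pb.dim = 2 := by
    show (minpoly ℚ θ).natDegree = 2
    rw [hmin, Polynomial.natDegree_X_pow_sub_C]
  have hrank : Module.finrank ℚ K = 2 := by rw [pb.finrank, hpbdim]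
  -- decomposition of elements of K
  have hdecomp : ∀ z : K, ∃ x y : ℚ, z = algebraMap ℚ K x + y • θ := by
    intro z
    have hz : z ∈ Algebra.adjoin ℚ ({θ} : Set K) := hgen ▸ Algebra.mem_top
    induction hz using Algebra.adjoin_induction with
    | mem w hw =>
      rw [Set.mem_singleton_iff] at hw
      exact ⟨0, 1, by simp [hw]⟩
    | algebraMap r => exact ⟨r, 0, by simp⟩
    | add u v _ _ hu hv =>
      obtain ⟨x1, y1, rfl⟩ := hu
      obtain ⟨x2, y2, rfl⟩ := hv
      exact ⟨x1 + x2, y1 + y2, by rw [map_add]; module⟩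
    | mul u v _ _ hu hv =>
      obtain ⟨x1, y1, rfl⟩ := hu
      obtain ⟨x2, y2, rfl⟩ := hv
      refine ⟨x1 * x2 + y1 * y2 * δ, x1 * y2 + y1 * x2, ?_⟩
      have : (y1 • θ) * (y2 • θ) = (y1 * y2) • ((δ : ℤ) : K) := by
        rw [smul_mul_smul_comm, ← pow_two, hθK]
      rw [add_mul, mul_add, mul_add, this]
      simp only [Algebra.smul_def, map_mul, map_add, map_intCast]
      push_cast
      ring
  -- trace formula
  have htrθ : Algebra.trace ℚ K θ = 0 := by
    have := pb.trace_gen_eq_nextCoeff_minpoly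
    rw [hpbgen, hmin] at this
    rw [this, Polynomial.nextCoeff_of_natDegree_pos (by rw [Polynomial.natDegree_X_pow_sub_C]; norm_num),
      Polynomial.natDegree_X_pow_sub_C, Polynomial.coeff_sub, Polynomial.coeff_X_pow, Polynomial.coeff_C]
    norm_num
  have htrace : ∀ x y : ℚ, Algebra.trace ℚ K (algebraMap ℚ K x + y • θ) = 2 * x := by
    intro x y
    rw [map_add, Algebra.trace_algebraMap, map_smul, htrθ, hrank]
    simp
  -- norm formula
  have hnormθc : ∀ c : ℚ, Algebra.norm ℚ (θ + algebraMap ℚ K c) = c ^ 2 - (δ : ℚ) := by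
    intro c
    have hint : IsIntegral ℚ (θ + algebraMap ℚ K c) := hθQint.add (isIntegral_algebraMap)
    have hmem : pb.gen ∈ Algebra.adjoin ℚ ({θ + algebraMap ℚ K c} : Set K) := by
      rw [hpbgen]
      have h1 : θ + algebraMap ℚ K c ∈ Algebra.adjoin ℚ ({θ + algebraMap ℚ K c} : Set K) :=
        Algebra.self_mem_adjoin_singleton _ _
      have h2 : algebraMap ℚ K c ∈ Algebra.adjoin ℚ ({θ + algebraMap ℚ K c} : Set K) :=
        Subalgebra.algebraMap_mem _ _
      simpa using Subalgebra.sub_mem _ h1 h2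
    let pbc := PowerBasis.ofAdjoinEqTop hint (pb.adjoin_eq_top_of_gen_mem_adjoin hmem)
    have hgenc : pbc.gen = θ + algebraMap ℚ K c := rfl
    have hminc : minpoly ℚ (θ + algebraMap ℚ K c) = (X ^ 2 - C (δ : ℚ)).comp (X - C c) := by
      rw [minpoly.add_algebraMap, hmin]
    have hdimc : pbc.dim = 2 := by
      show (minpoly ℚ (θ + algebraMap ℚ K c)).natDegree = 2
      rw [hminc, Polynomial.natDegree_comp, Polynomial.natDegree_X_pow_sub_C,
        Polynomial.natDegree_X_sub_C, mul_one]
    have := Algebra.PowerBasis.norm_gen_eq_coeff_zero_minpoly pbc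
    rw [hgenc, hdimc, hminc] at this
    rw [this, Polynomial.coeff_zero_eq_eval_zero, Polynomial.eval_comp]
    simp
  have hnorm : ∀ x y : ℚ, Algebra.norm ℚ (algebraMap ℚ K x + y • θ) = x ^ 2 - (δ : ℚ) * y ^ 2 := by
    intro x y
    rcases eq_or_ne y 0 with rfl | hy
    · rw [zero_smul, add_zero, Algebra.norm_algebraMap, hrank]
      ring
    · have : algebraMap ℚ K x + y • θ = algebraMap ℚ K y * (θ + algebraMap ℚ K (x / y)) := by
        rw [mul_add, ← map_mul, Algebra.smul_def]
        field_simp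
        ring
      rw [this, map_mul, Algebra.norm_algebraMap, hrank, hnormθc]
      field_simp
  -- move to the ring of integers
  have hθZint : IsIntegral ℤ θ := by
    refine ⟨X ^ 2 - C δ, Polynomial.monic_X_pow_sub_C _ (by norm_num), ?_⟩
    have : (Polynomial.aeval θ) (X ^ 2 - C δ) = 0 := by
      rw [map_sub, map_pow, aeval_X, aeval_C, hθK]
      simp
    exact this
  set θ' : 𝓞 K := ⟨θ, hθZint⟩ with hθ'_def
  have hcoeθ' : (algebraMap (𝓞 K) K) θ' = θ := rfl
  have hsq : θ' ^ 2 = 1 - (N : 𝓞 K) ^ m := by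
    apply RingOfIntegers.coe_injective
    have hl : (algebraMap (𝓞 K) K) (θ' ^ 2) = ((δ : ℤ) : K) := by
      rw [map_pow, hcoeθ', hθK]
    have hr : (algebraMap (𝓞 K) K) (1 - (N : 𝓞 K) ^ m) = 1 - (N : K) ^ m := by
      push_cast
      ring
    rw [hl, hr, hδ_def]
    push_cast
    ring
  set π : 𝓞 K := 1 - θ' with hπ
  set A : Ideal (𝓞 K) := Ideal.span {(N : 𝓞 K), π} with hA
  set Abar : Ideal (𝓞 K) := Ideal.span {(N : 𝓞 K), 1 + θ'} with hAbar
  have h2pi : 2 * π = π ^ 2 + (N : 𝓞 K) ^ m := by rw [hπ]; linear_combination -hsq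
  have hNmfac : (N : 𝓞 K) ^ m = π * (1 + θ') := by rw [hπ]; linear_combination hsq
  have hNA : (N : 𝓞 K) ∈ A := Ideal.subset_span (Set.mem_insert _ _)
  have hπA : π ∈ A := Ideal.subset_span (Set.mem_insert_of_mem _ rfl)
  have hNAbar : (N : 𝓞 K) ∈ Abar := Ideal.subset_span (Set.mem_insert _ _)
  have hθAbar : 1 + θ' ∈ Abar := Ideal.subset_span (Set.mem_insert_of_mem _ rfl)
  obtain ⟨u, hu⟩ : ∃ u : ℤ, 2 * u - (N : ℤ) ^ m = 1 := by
    obtain ⟨c, hc⟩ : Odd ((N : ℤ) ^ m) := (Int.odd_iff.mpr (by omega)).pow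
    exact ⟨c + 1, by omega⟩
  obtain ⟨a, ha⟩ : ∃ a : ℤ, 2 * a - (N : ℤ) = 1 := ⟨((N : ℤ) + 1) / 2, by omega⟩
  -- π ∈ A ^ k for all k ≤ m
  have hπAk : ∀ k, k ≤ m → π ∈ A ^ k := by
    intro k hk
    induction k with
    | zero => simp
    | succ n ih =>
      have hπAn : π ∈ A ^ n := ih (by omega)
      have hπ2 : π ^ 2 ∈ A ^ (n + 1) := by
        rw [pow_succ, pow_two]
        exact Ideal.mul_mem_mul hπAn hπA
      have hNk : (N : 𝓞 K) ^ (n + 1) ∈ A ^ (n + 1) := Ideal.pow_mem_pow hNA _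
      have hNm' : (N : 𝓞 K) ^ m ∈ A ^ (n + 1) := by
        have e : (N : 𝓞 K) ^ m = (N : 𝓞 K) ^ (n + 1) * (N : 𝓞 K) ^ (m - (n + 1)) := by
          rw [← pow_add]
          congr 1
          omega
        rw [e]
        exact Ideal.mul_mem_right _ _ hNk
      have h2π : 2 * π ∈ A ^ (n + 1) := by
        rw [h2pi]
        exact Ideal.add_mem _ hπ2 hNm'
      have hNmπ : (N : 𝓞 K) ^ m * π ∈ A ^ (n + 1) := Ideal.mul_mem_right _ _ hNm'
      have e : π = (u : 𝓞 K) * (2 * π) - (N : 𝓞 K) ^ m * π := by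
        have e1 : ((2 * u - (N : ℤ) ^ m : ℤ) : 𝓞 K) = 1 := by rw [hu]; simp
        push_cast at e1
        linear_combination (θ' - 1) * e1
      rw [e]
      exact Ideal.sub_mem _ (Ideal.mul_mem_left _ _ h2π) hNmπ
  have hAm : A ^ m = Ideal.span {π} := by
    apply le_antisymm
    · have h1 : A = Ideal.span {(N : 𝓞 K)} ⊔ Ideal.span {π} := by
        rw [hA, Ideal.span_insert]
      rw [h1]
      refine le_trans (aux_sup_pow_19 _ _ m) (sup_le le_rfl ?_)
      rw [Ideal.span_singleton_pow, Ideal.span_singleton_le_span_singleton]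
      exact ⟨1 + θ', hNmfac⟩
    · rw [Ideal.span_le, Set.singleton_subset_iff]
      exact hπAk m le_rfl
  -- A * Abar = (N)
  have hAAbar : A * Abar = Ideal.span {(N : 𝓞 K)} := by
    apply le_antisymm
    · rw [hA, hAbar, Ideal.span_insert, Ideal.span_insert, Ideal.sup_mul, Ideal.mul_sup,
        Ideal.mul_sup]
      simp only [Ideal.span_singleton_mul_span_singleton]
      refine sup_le (sup_le ?_ ?_) (sup_le ?_ ?_) <;>
        rw [Ideal.span_singleton_le_span_singleton]
      · exact ⟨(N : 𝓞 K), by ring⟩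
      · exact ⟨1 + θ', by ring⟩
      · exact ⟨π, by ring⟩
      · exact ⟨(N : 𝓞 K) ^ (m - 1), by rw [← hNmfac, ← pow_succ']; congr 1; omega⟩
    · rw [Ideal.span_le, Set.singleton_subset_iff]
      have h2N : 2 * (N : 𝓞 K) ∈ A * Abar := by
        have e : 2 * (N : 𝓞 K) = (N : 𝓞 K) * (1 + θ') + π * (N : 𝓞 K) := by rw [hπ]; ring
        rw [e]
        exact Ideal.add_mem _ (Ideal.mul_mem_mul hNA hθAbar) (Ideal.mul_mem_mul hπA hNAbar)
      have hN2 : (N : 𝓞 K) * (N : 𝓞 K) ∈ A * Abar := Ideal.mul_mem_mul hNA hNAbar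
      have e : (N : 𝓞 K) = (a : 𝓞 K) * (2 * (N : 𝓞 K)) - (N : 𝓞 K) * (N : 𝓞 K) := by
        have e1 : ((2 * a - (N : ℤ) : ℤ) : 𝓞 K) = 1 := by rw [ha]; simp
        push_cast at e1
        linear_combination -(N : 𝓞 K) * e1
      rw [e]
      exact Ideal.sub_mem _ (Ideal.mul_mem_left _ _ h2N) hN2
  -- coprimality
  have hcop : A ⊔ Abar = ⊤ := by
    rw [Ideal.eq_top_iff_one]
    have h2 : (2 : 𝓞 K) ∈ A ⊔ Abar := by
      have e : (2 : 𝓞 K) = π + (1 + θ') := by rw [hπ]; ring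
      rw [e]
      exact Ideal.add_mem _ (Ideal.mem_sup_left hπA) (Ideal.mem_sup_right hθAbar)
    have hNmem : (N : 𝓞 K) ∈ A ⊔ Abar := Ideal.mem_sup_left hNA
    have e : (1 : 𝓞 K) = (a : 𝓞 K) * 2 - (N : 𝓞 K) := by
      have e1 : ((2 * a - (N : ℤ) : ℤ) : 𝓞 K) = 1 := by rw [ha]; simp
      push_cast at e1
      linear_combination -e1
    rw [e]
    exact Ideal.sub_mem _ (Ideal.mul_mem_left _ _ h2) hNmem
  -- nonzeroness
  have hN0 : (N : 𝓞 K) ≠ 0 := by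
    exact_mod_cast Nat.cast_ne_zero.mpr (by omega)
  have hA0 : A ≠ 0 := by
    intro h
    rw [h] at hNA
    exact hN0 ((Ideal.mem_bot).mp hNA)
  -- norm of π
  have hnormπZ : Algebra.norm ℤ π = (N : ℤ) ^ m := by
    have hcoeπ : (algebraMap (𝓞 K) K) π = algebraMap ℚ K 1 + (-1 : ℚ) • θ := by
      rw [hπ, map_sub, map_one, hcoeθ']
      simp only [map_one, neg_smul, one_smul]
      ring
    have h1 : (Algebra.norm ℤ π : ℚ) = Algebra.norm ℚ ((algebraMap (𝓞 K) K) π) :=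
      Algebra.coe_norm_int π
    rw [hcoeπ, hnorm 1 (-1)] at h1
    have : (Algebra.norm ℤ π : ℚ) = ((( (N:ℤ)^m : ℤ)) : ℚ) := by
      rw [h1, hδ_def]
      push_cast
      ring
    exact_mod_cast this
  have hnormA : Ideal.absNorm A = N := by
    have h1 : Ideal.absNorm (A ^ m) = (Ideal.absNorm A) ^ m := map_pow _ _ _
    rw [hAm, Ideal.absNorm_span_singleton, hnormπZ] at h1
    have h2 : ((N : ℤ) ^ m).natAbs = N ^ m := by
      rw [Int.natAbs_pow]
      simp
    rw [h2] at h1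
    exact Nat.pow_left_injective (by omega) h1.symm
  -- the class group element
  have hAmem : A ∈ (Ideal (𝓞 K))⁰ := mem_nonZeroDivisors_of_ne_zero hA0
  refine ⟨ClassGroup.mk0 ⟨A, hAmem⟩, ?_⟩
  set g : ClassGroup (𝓞 K) := ClassGroup.mk0 ⟨A, hAmem⟩ with hg
  have hpow_val : ∀ d : ℕ, ((⟨A, hAmem⟩ : (Ideal (𝓞 K))⁰) ^ d : (Ideal (𝓞 K))⁰) =
      ⟨A ^ d, pow_mem hAmem d⟩ := by
    intro d
    exact Subtype.ext (SubmonoidClass.coe_pow _ _)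
  have hgd_iff : ∀ d : ℕ, g ^ d = 1 ↔ (A ^ d).IsPrincipal := by
    intro d
    rw [hg, ← map_pow, hpow_val d]
    exact ClassGroup.mk0_eq_one_iff _
  have hgm : g ^ m = 1 := (hgd_iff m).mpr ⟨π, by rw [hAm]⟩
  have hdvd : orderOf g ∣ m := orderOf_dvd_of_pow_eq_one hgm
  by_contra hne
  set d : ℕ := orderOf g with hd_def
  have hd1 : 1 ≤ d := orderOf_pos g
  have hdm : d < m := lt_of_le_of_ne (Nat.le_of_dvd (by omega) hdvd) hne
  have hd3 : 3 * d ≤ m := by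
    obtain ⟨t, ht⟩ := hdvd
    have ht0 : t ≠ 0 := by
      rintro rfl
      rw [mul_zero] at ht
      omega
    have ht1 : t ≠ 1 := by
      rintro rfl
      rw [mul_one] at ht
      omega
    have htodd : t % 2 = 1 := by
      rcases Nat.even_or_odd t with ⟨s, hs⟩ | ho
      · exfalso
        rw [hs] at ht
        have e : d * (s + s) = 2 * (d * s) := by ring
        rw [e] at ht
        omega
      · exact Nat.odd_iff.mp ho
    have ht3 : 3 ≤ t := by omega
    calc 3 * d = d * 3 := by ring
    _ ≤ d * t := Nat.mul_le_mul_left d ht3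
    _ = m := ht.symm
  -- A ^ d is principal
  obtain ⟨α, hα⟩ : (A ^ d).IsPrincipal := (hgd_iff d).mp (by rw [hd_def]; exact pow_orderOf_eq_one g)
  have hAd : A ^ d = Ideal.span {α} := hα
  have hnormAd : (Algebra.norm ℤ α).natAbs = N ^ d := by
    have h1 : Ideal.absNorm (A ^ d) = (Ideal.absNorm A) ^ d := map_pow _ _ _
    rw [hAd, Ideal.absNorm_span_singleton, hnormA] at h1
    exact h1
  -- decompose α
  obtain ⟨x, y, hxy⟩ := hdecomp ((algebraMap (𝓞 K) K) α)
  have hnα : (Algebra.norm ℤ α : ℚ) = x ^ 2 - (δ : ℚ) * y ^ 2 := by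
    have h1 := Algebra.coe_norm_int (K := K) α
    have h2 : ((α : K)) = (algebraMap (𝓞 K) K) α := rfl
    rw [h1, h2, hxy, hnorm]
  have hnα_nonneg : (0 : ℚ) ≤ x ^ 2 - (δ : ℚ) * y ^ 2 := by
    have h1 : (δ : ℚ) < 0 := by exact_mod_cast hδneg
    nlinarith [sq_nonneg x, sq_nonneg y]
  have hnormαZ : Algebra.norm ℤ α = (N : ℤ) ^ d := by
    have h0 : (0 : ℤ) ≤ Algebra.norm ℤ α := by
      have h' := hnα_nonneg
      rw [← hnα] at h'
      exact_mod_cast h'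
    rw [← Int.natAbs_of_nonneg h0, hnormAd]
    push_cast
    ring
  have hxyN : x ^ 2 - (δ : ℚ) * y ^ 2 = ((N : ℤ) : ℚ) ^ d := by
    rw [← hnα, hnormαZ]
    push_cast
    ring
  -- trace gives that 2x is an integer
  have htrα : Algebra.trace ℚ K ((algebraMap (𝓞 K) K) α) = 2 * x := by rw [hxy, htrace]
  obtain ⟨e, he⟩ : ∃ e : ℤ, (e : ℚ) = 2 * x := by
    have hint : IsIntegral ℤ (Algebra.trace ℚ K ((algebraMap (𝓞 K) K) α)) :=
      Algebra.isIntegral_trace (RingOfIntegers.isIntegral_coe α)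
    obtain ⟨e, he⟩ := IsIntegrallyClosed.isIntegral_iff.mp hint
    rw [htrα] at he
    exact ⟨e, by rw [← he, eq_intCast]⟩
  -- squarefreeness gives that 2y is an integer
  obtain ⟨f, hf⟩ : ∃ f : ℤ, (2 * y : ℚ) = (f : ℚ) := by
    obtain ⟨f, hf⟩ := aux_sf_19 δ hsf (2 * y) (e ^ 2 - 4 * (N : ℤ) ^ d) (by
      push_cast
      linear_combination (-(e : ℚ) - 2 * x) * he - 4 * hxyN)
    exact ⟨f, hf⟩
  rcases eq_or_ne y 0 with hy0 | hy0
  · -- case y = 0 : the ideal A ^ d would be "self-conjugate", contradiction with coprimality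
    have hx2 : x ^ 2 = ((N : ℤ) : ℚ) ^ d := by
      rw [← hxyN, hy0]
      ring
    have hα2 : α ^ 2 = (N : 𝓞 K) ^ d := by
      apply RingOfIntegers.coe_injective
      have hc1 : (algebraMap (𝓞 K) K) (α ^ 2) = ((algebraMap (𝓞 K) K) α) ^ 2 := map_pow _ _ _
      have hc2 : (algebraMap (𝓞 K) K) ((N : 𝓞 K) ^ d) = (N : K) ^ d := by
        rw [map_pow, map_natCast]
      rw [hc1, hc2, hxy, hy0, zero_smul, add_zero, ← map_pow, hx2, map_pow]
      norm_num
    have hsq_ideal : A ^ d * A ^ d = A ^ d * Abar ^ d := by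
      calc A ^ d * A ^ d = Ideal.span {α} * Ideal.span {α} := by rw [hAd]
      _ = Ideal.span {α ^ 2} := by rw [Ideal.span_singleton_mul_span_singleton, pow_two]
      _ = Ideal.span {(N : 𝓞 K)} ^ d := by rw [hα2, Ideal.span_singleton_pow]
      _ = (A * Abar) ^ d := by rw [hAAbar]
      _ = A ^ d * Abar ^ d := mul_pow _ _ _
    have hAd0 : A ^ d ≠ 0 := pow_ne_zero _ hA0
    have hcancel : A ^ d = Abar ^ d := mul_left_cancel₀ hAd0 hsq_ideal
    have htop : A ^ d = ⊤ := by
      have hst : A ^ d ⊔ Abar ^ d = ⊤ := Ideal.pow_sup_pow_eq_top hcop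
      rw [← hcancel, sup_idem] at hst
      exact hst
    have h1 : Ideal.absNorm (A ^ d) = 1 := Ideal.absNorm_eq_one_iff.mpr htop
    rw [map_pow, hnormA] at h1
    have hNd : 3 ≤ N ^ d := le_trans hN (Nat.le_self_pow (by omega) N)
    omega
  · -- case y ≠ 0 : the norm is too large
    have hf0 : f ≠ 0 := by
      intro h
      rw [h] at hf
      push_cast at hf
      exact hy0 (by linarith)
    have hkey : e ^ 2 - δ * f ^ 2 = 4 * (N : ℤ) ^ d := by
      have hq : ((e ^ 2 - δ * f ^ 2 : ℤ) : ℚ) = ((4 * (N : ℤ) ^ d : ℤ) : ℚ) := by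
        push_cast
        linear_combination ((e : ℚ) + 2 * x) * he + (2 * y * (δ : ℚ) + (δ:ℚ) * (f:ℚ)) * hf + 4 * hxyN
      exact_mod_cast hq
    have hf2 : 1 ≤ f ^ 2 := by
      have h1 : 1 ≤ |f| := Int.one_le_abs (by exact_mod_cast hf0)
      nlinarith [sq_abs f]
    have hpow1 : (1 : ℤ) ≤ (N : ℤ) ^ d := by
      have h1 : 1 ≤ N ^ d := Nat.one_le_pow d N (by omega)
      exact_mod_cast h1
    have hsplit : (N : ℤ) ^ m = (N : ℤ) ^ d * (N : ℤ) ^ (m - d) := by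
      rw [← pow_add]
      congr 1
      omega
    have hge : (9 : ℤ) ≤ (N : ℤ) ^ (m - d) := by
      calc (9 : ℤ) = 3 ^ 2 := by norm_num
      _ ≤ (N : ℤ) ^ 2 := pow_le_pow_left₀ (by norm_num) hN3 2
      _ ≤ (N : ℤ) ^ (m - d) := pow_le_pow_right₀ (by omega) (by omega)
    have h9 : 9 * (N : ℤ) ^ d ≤ (N : ℤ) ^ m := by
      rw [hsplit]
      calc 9 * (N : ℤ) ^ d ≤ (N : ℤ) ^ (m - d) * (N : ℤ) ^ d :=
        mul_le_mul_of_nonneg_right hge (by linarith)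
      _ = (N : ℤ) ^ d * (N : ℤ) ^ (m - d) := mul_comm _ _
    have hmono : ((N : ℤ) ^ m - 1) * 1 ≤ ((N : ℤ) ^ m - 1) * f ^ 2 :=
      mul_le_mul_of_nonneg_left hf2 (by linarith)
    have hkey2 : e ^ 2 + ((N : ℤ) ^ m - 1) * f ^ 2 = 4 * (N : ℤ) ^ d := by
      rw [hδ_def] at hkey
      linarith [hkey]
    linarith [sq_nonneg e]
end
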